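/- arXiv:2006.07051 — 7 statements merged into one kernel-verified Lean document; each statement's English description precedes it below -/
import Mathlib

section
/- Let γ > 0 and let t₀ > 0 satisfy (t₀ - 1)e^{t₀} = 1/γ - 1. Define û(t) = γ(e^{t₀} - e^t) for t ∈ (0, t₀] and û(t) = 0 for t > t₀, and let ŷ(t) = e^t(-1 + ∫₀^t û(τ) dτ). Then for t ∈ (0, t₀) one has ŷ(t) = γ·t·e^{t+t₀} - γ·e^{2t} + (γ - 1)·e^t ≤ 0, and for all t ≥ t₀ one has ŷ(t) = 0. In particular ŷ(t) ≤ 0 for all t ≥ 0. -/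
open MeasureTheory intervalIntegral

/-- With `t₀ > 0` solving `(t₀-1)e^{t₀} = 1/γ - 1`,
`uhat(t) = γ(e^{t₀} - e^t)` for `t ≤ t₀` and `0` for `t > t₀`, and the state
`yhat(t) = e^t(-1 + ∫₀^t uhat)`, one has: for `t ∈ (0, t₀)`,
`yhat(t) = γ t e^{t+t₀} - γ e^{2t} + (γ-1)e^t ≤ 0`; for `t ≥ t₀`, `yhat(t) = 0`;
and `yhat(t) ≤ 0` for all `t ≥ 0`. -/
theorem stmt_3 (γ t₀ : ℝ) (hγ : 0 < γ) (ht₀ : 0 < t₀)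
    (heq : (t₀ - 1) * Real.exp t₀ = 1 / γ - 1)
    (uhat : ℝ → ℝ)
    (huhat : ∀ t, uhat t = if t ≤ t₀ then γ * (Real.exp t₀ - Real.exp t) else 0)
    (yhat : ℝ → ℝ)
    (hyhat : ∀ t, yhat t = Real.exp t * (-1 + ∫ τ in (0:ℝ)..t, uhat τ)) :
    (∀ t ∈ Set.Ioo (0:ℝ) t₀,
        yhat t = γ * t * Real.exp (t + t₀) - γ * Real.exp (2 * t)
          + (γ - 1) * Real.exp t ∧ yhat t ≤ 0) ∧
    (∀ t, t₀ ≤ t → yhat t = 0) ∧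
    (∀ t, 0 ≤ t → yhat t ≤ 0) := by
  -- uhat coincides with a continuous function
  have hu : uhat = fun t => γ * (Real.exp t₀ - Real.exp (min t t₀)) := by
    funext t
    rw [huhat t]
    rcases le_or_gt t t₀ with h | h
    · simp [min_eq_left h, h]
    · simp [min_eq_right h.le, not_le.mpr h]
  have hcont : Continuous uhat := by
    rw [hu]
    exact continuous_const.mul (continuous_const.sub (Real.continuous_exp.comp
      (continuous_id.min continuous_const)))
  have hInt : ∀ a b : ℝ, IntervalIntegrable uhat volume a b := fun a b =>
    hcont.intervalIntegrable a b
  -- integral formula for t ≤ t₀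
  have hI : ∀ t : ℝ, t ≤ t₀ →
      (∫ τ in (0:ℝ)..t, uhat τ) = γ * (t * Real.exp t₀ - Real.exp t + 1) := by
    intro t ht
    have hcongr : (∫ τ in (0:ℝ)..t, uhat τ)
        = ∫ τ in (0:ℝ)..t, (γ * Real.exp t₀ - γ * Real.exp τ) := by
      apply intervalIntegral.integral_congr
      intro τ hτ
      have hτ' : τ ≤ t₀ := by
        rcases le_total 0 t with h | h
        · rw [Set.uIcc_of_le h] at hτ; exact le_trans hτ.2 ht
        · rw [Set.uIcc_of_ge h] at hτ; exact le_trans hτ.2 (le_of_lt ht₀)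
      rw [huhat τ, if_pos hτ']; ring
    rw [hcongr, intervalIntegral.integral_sub (f := fun τ => γ * Real.exp t₀) (g := fun τ => γ * Real.exp τ)
        ((continuous_const.mul continuous_const).intervalIntegrable 0 t)
        ((continuous_const.mul Real.continuous_exp).intervalIntegrable 0 t),
      intervalIntegral.integral_const_mul, intervalIntegral.integral_const_mul,
      integral_exp, intervalIntegral.integral_const]
    simp [Real.exp_zero]
    ring
  -- integral equals 1 for t ≥ t₀
  have hI1 : ∀ t : ℝ, t₀ ≤ t → (∫ τ in (0:ℝ)..t, uhat τ) = 1 := by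
    intro t ht
    have hsplit : (∫ τ in (0:ℝ)..t, uhat τ)
        = (∫ τ in (0:ℝ)..t₀, uhat τ) + ∫ τ in t₀..t, uhat τ :=
      (intervalIntegral.integral_add_adjacent_intervals (hInt 0 t₀) (hInt t₀ t)).symm
    have hzero : (∫ τ in t₀..t, uhat τ) = 0 := by
      have : (∫ τ in t₀..t, uhat τ) = ∫ τ in t₀..t, (0:ℝ) := by
        apply intervalIntegral.integral_congr
        intro τ hτ
        rw [Set.uIcc_of_le ht] at hτ
        rw [hu]
        simp [min_eq_right hτ.1]
      simp [this]
    rw [hsplit, hzero, hI t₀ le_rfl]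
    have hγ' : γ ≠ 0 := ne_of_gt hγ
    have : γ * ((t₀ - 1) * Real.exp t₀) = γ * (1 / γ - 1) := by rw [heq]
    field_simp at this ⊢
    nlinarith [this]
  -- main formula and bound on (0, t₀)
  have hformula : ∀ t ∈ Set.Ioo (0:ℝ) t₀,
      yhat t = γ * t * Real.exp (t + t₀) - γ * Real.exp (2 * t)
        + (γ - 1) * Real.exp t := by
    intro t ht
    rw [hyhat t, hI t (le_of_lt ht.2), Real.exp_add, two_mul, Real.exp_add]
    ring
  have hbound : ∀ t : ℝ, t ≤ t₀ →
      γ * t * Real.exp (t + t₀) - γ * Real.exp (2 * t) + (γ - 1) * Real.exp t ≤ 0 := by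
    intro t ht
    have htan : (t - t₀ + 1) * Real.exp t₀ ≤ Real.exp t := by
      have h1 : t - t₀ + 1 ≤ Real.exp (t - t₀) := Real.add_one_le_exp (t - t₀)
      have h2 := mul_le_mul_of_nonneg_right h1 (Real.exp_pos t₀).le
      rwa [← Real.exp_add, sub_add_cancel] at h2
    have hexp := Real.exp_pos t
    have hexp0 := Real.exp_pos t₀
    have key : γ * t * Real.exp t₀ - γ * Real.exp t + γ - 1 ≤ 0 := by
      have hγ' : γ ≠ 0 := ne_of_gt hγ
      have heq' : γ * ((t₀ - 1) * Real.exp t₀) = 1 - γ := by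
        rw [heq]; field_simp
      nlinarith [mul_le_mul_of_nonneg_left htan hγ.le]
    have : γ * t * Real.exp (t + t₀) - γ * Real.exp (2 * t) + (γ - 1) * Real.exp t
        = Real.exp t * (γ * t * Real.exp t₀ - γ * Real.exp t + γ - 1) := by
      rw [Real.exp_add, two_mul, Real.exp_add]; ring
    rw [this]
    exact mul_nonpos_of_nonneg_of_nonpos hexp.le key
  have hzero : ∀ t, t₀ ≤ t → yhat t = 0 := by
    intro t ht
    rw [hyhat t, hI1 t ht]
    ring
  refine ⟨fun t ht => ⟨hformula t ht, ?_⟩, hzero, ?_⟩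
  · rw [hformula t ht]; exact hbound t ht.2.le
  · intro t ht
    rcases lt_or_ge t t₀ with h | h
    · rcases eq_or_lt_of_le ht with h0 | h0
      · rw [hyhat t, ← h0]
        simp
      · rw [hformula t ⟨h0, h⟩]
        exact hbound t h.le
    · rw [hzero t h]
end

section
/- Let γ > 0, let t₀ > 0 satisfy (t₀ - 1)e^{t₀} = 1/γ - 1, let T > t₀ satisfy γ e^T ≥ 1 + γ e^{t₀}, and let û(t) = γ(e^{t₀} - e^t) for t ∈ (0,t₀], û(t) = 0 for t > t₀. For u ∈ L²(0,T) define J(u) = (γ e^T - 1)·(1 - ∫₀^T u) + ∫₀^T [½ u(t)² + γ e^t u(t)] dt + 1 - γ. Then for every δ ∈ L²(0,T) with ∫₀^T δ(τ) dτ ≤ 0 and δ(t) ≥ 0 for almost every t ∈ (t₀, T), one has J(û + δ) ≥ J(û) + (γ e^T - γ e^{t₀} - 1)·(-∫₀^T δ(τ) dτ) ≥ J(û). -/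
open MeasureTheory intervalIntegral

/-- With `t₀ > 0` solving `(t₀-1)e^{t₀} = 1/γ - 1`, `T > t₀` with
`γe^T ≥ 1 + γe^{t₀}`, `uhat` the candidate optimal control and
`J(u) = (γe^T - 1)(1 - ∫₀^T u) + ∫₀^T [½u² + γe^t u] + 1 - γ` the reduced
objective, every perturbation `δ ∈ L²(0,T)` with `∫₀^T δ ≤ 0` and `δ ≥ 0`
a.e. on `(t₀, T)` satisfies
`J(uhat + δ) ≥ J(uhat) + (γe^T - γe^{t₀} - 1)(-∫₀^T δ) ≥ J(uhat)`. -/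
theorem stmt_5 (γ t₀ T : ℝ) (hγ : 0 < γ) (ht₀ : 0 < t₀)
    (heq : (t₀ - 1) * Real.exp t₀ = 1 / γ - 1)
    (hT : t₀ < T)
    (hT' : 1 + γ * Real.exp t₀ ≤ γ * Real.exp T)
    (uhat : ℝ → ℝ)
    (huhat : ∀ t, uhat t = if t ≤ t₀ then γ * (Real.exp t₀ - Real.exp t) else 0)
    (J : (ℝ → ℝ) → ℝ)
    (hJ : ∀ u : ℝ → ℝ,
      J u = (γ * Real.exp T - 1) * (1 - ∫ τ in (0:ℝ)..T, u τ)
        + (∫ t in (0:ℝ)..T, (1/2 * (u t)^2 + γ * Real.exp t * u t))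
        + 1 - γ)
    (δ : ℝ → ℝ)
    (hδ : MemLp δ 2 (volume.restrict (Set.Ioc (0:ℝ) T)))
    (hδint : (∫ τ in (0:ℝ)..T, δ τ) ≤ 0)
    (hδpos : ∀ᵐ t ∂(volume.restrict (Set.Ioc t₀ T)), 0 ≤ δ t) :
    J (uhat + δ)
      ≥ J uhat + (γ * Real.exp T - γ * Real.exp t₀ - 1)
          * (-∫ τ in (0:ℝ)..T, δ τ) ∧
    J uhat + (γ * Real.exp T - γ * Real.exp t₀ - 1)
        * (-∫ τ in (0:ℝ)..T, δ τ) ≥ J uhat := by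
  have h0T : (0:ℝ) ≤ T := le_of_lt (ht₀.trans hT)
  set μ := volume.restrict (Set.Ioc (0:ℝ) T) with hμ
  haveI : IsFiniteMeasure μ :=
    ⟨by rw [hμ, Measure.restrict_apply_univ]; exact measure_Ioc_lt_top⟩
  set c := γ * Real.exp t₀ with hc
  have hce : ∀ t, uhat t + γ * Real.exp t = if t ≤ t₀ then c else γ * Real.exp t := by
    intro t; rw [huhat]; split_ifs <;> ring
  -- measurability
  have hmu : Measurable uhat := by
    have h : uhat = fun t => if t ≤ t₀ then γ * (Real.exp t₀ - Real.exp t) else 0 :=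
      funext huhat
    rw [h]
    exact Measurable.ite measurableSet_Iic (by fun_prop) measurable_const
  have hmg : Measurable (fun t => uhat t + γ * Real.exp t) := by fun_prop
  -- basic integrabilities
  have intδ : Integrable δ μ := hδ.integrable one_le_two
  have intδsq : Integrable (fun t => δ t ^ 2) μ := hδ.integrable_sq
  -- bound for uhat
  have hub : ∀ t, ‖uhat t‖ ≤ c := by
    intro t
    rw [huhat, Real.norm_eq_abs]
    split_ifs with h
    · have h1 : Real.exp t ≤ Real.exp t₀ := Real.exp_le_exp.mpr h
      have h2 : 0 < Real.exp t := Real.exp_pos t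
      rw [abs_le]; constructor <;> nlinarith
    · simpa using mul_nonneg hγ.le (Real.exp_pos t₀).le
  have intuhat : Integrable uhat μ := by
    refine (integrable_const c).mono' hmu.aestronglyMeasurable ?_
    exact Filter.Eventually.of_forall hub
  -- bound for g on Ioc 0 T
  have hgb : ∀ t ∈ Set.Ioc (0:ℝ) T, ‖uhat t + γ * Real.exp t‖ ≤ 2 * γ * Real.exp T := by
    intro t ht
    have h1 : Real.exp t ≤ Real.exp T := Real.exp_le_exp.mpr ht.2
    have h2 : ‖uhat t‖ ≤ c := hub t
    have h3 : Real.exp t₀ ≤ Real.exp T := Real.exp_le_exp.mpr hT.le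
    have h4 : 0 < Real.exp t := Real.exp_pos t
    rw [Real.norm_eq_abs] at *
    rw [abs_le]; rw [abs_le] at h2
    constructor <;> nlinarith
  have intf1 : Integrable (fun t => 1/2 * (uhat t)^2 + γ * Real.exp t * uhat t) μ := by
    refine (integrable_const (1/2 * c^2 + 2 * γ * Real.exp T * c)).mono'
      (((((hmu.pow_const 2).const_mul (1/2)).add
        ((Real.measurable_exp.const_mul γ).mul hmu))).aestronglyMeasurable) ?_
    rw [hμ]
    filter_upwards [self_mem_ae_restrict measurableSet_Ioc] with t ht
    have h1 : ‖uhat t‖ ≤ c := hub t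
    have h2 : Real.exp t ≤ Real.exp T := Real.exp_le_exp.mpr ht.2
    have h4 : 0 < Real.exp t := Real.exp_pos t
    have hC : 0 ≤ c := le_trans (norm_nonneg _) h1
    rw [Real.norm_eq_abs] at *
    rw [abs_le] at h1 ⊢
    have h5 : 0 < γ * Real.exp t := mul_pos hγ h4
    have hD : γ * Real.exp t ≤ γ * Real.exp T := by nlinarith
    have hA : 0 ≤ (γ * Real.exp t) * (uhat t + c) := mul_nonneg h5.le (by linarith [h1.1])
    have hB : 0 ≤ (γ * Real.exp t) * (c - uhat t) := mul_nonneg h5.le (by linarith [h1.2])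
    have hE : 0 ≤ (γ * Real.exp T - γ * Real.exp t) * c := mul_nonneg (by linarith) hC
    have hF : 0 ≤ (c - uhat t) * (c + uhat t) :=
      mul_nonneg (by linarith [h1.2]) (by linarith [h1.1])
    constructor
    · nlinarith [sq_nonneg (uhat t)]
    · nlinarith
  have intgδ : Integrable (fun t => (uhat t + γ * Real.exp t) * δ t) μ := by
    refine (intδ.norm.const_mul (2 * γ * Real.exp T)).mono'
      (hmg.aestronglyMeasurable.mul hδ.aestronglyMeasurable) ?_
    rw [hμ]
    filter_upwards [self_mem_ae_restrict measurableSet_Ioc] with t ht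
    rw [norm_mul]
    exact mul_le_mul_of_nonneg_right (hgb t ht) (norm_nonneg _)
  have intf2 : Integrable (fun t => 1/2 * (δ t)^2 + (uhat t + γ * Real.exp t) * δ t) μ :=
    (intδsq.const_mul (1/2)).add intgδ
  -- a.e. nonnegativity of (g - c) * δ
  have hae : ∀ᵐ t ∂μ, 0 ≤ ((uhat t + γ * Real.exp t) - c) * δ t := by
    have hsetU : Set.Ioc (0:ℝ) T = Set.Ioc 0 t₀ ∪ Set.Ioc t₀ T :=
      (Set.Ioc_union_Ioc_eq_Ioc ht₀.le hT.le).symm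
    rw [hμ, hsetU, Measure.restrict_union (Set.Ioc_disjoint_Ioc_of_le le_rfl) measurableSet_Ioc,
      ae_add_measure_iff]
    constructor
    · filter_upwards [self_mem_ae_restrict measurableSet_Ioc] with t ht
      rw [hce, if_pos ht.2]; simp
    · filter_upwards [self_mem_ae_restrict measurableSet_Ioc, hδpos] with t ht hδt
      rw [hce, if_neg (not_le.mpr ht.1)]
      refine mul_nonneg ?_ hδt
      have := Real.exp_le_exp.mpr ht.1.le
      rw [hc]; nlinarith
  -- key integral inequality
  have hgδ : c * (∫ t, δ t ∂μ) ≤ ∫ t, (uhat t + γ * Real.exp t) * δ t ∂μ := by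
    have h0 : 0 ≤ ∫ t, ((uhat t + γ * Real.exp t) - c) * δ t ∂μ :=
      integral_nonneg_of_ae hae
    have heq2 : ∫ t, ((uhat t + γ * Real.exp t) - c) * δ t ∂μ
        = (∫ t, (uhat t + γ * Real.exp t) * δ t ∂μ) - c * ∫ t, δ t ∂μ := by
      rw [← MeasureTheory.integral_const_mul c δ, ← integral_sub intgδ (intδ.const_mul c)]
      congr 1; funext t; ring
    linarith
  have hδsqnn : 0 ≤ ∫ t, δ t ^ 2 ∂μ := integral_nonneg fun t => sq_nonneg _
  -- translate interval integrals
  have hIδ : (∫ τ in (0:ℝ)..T, δ τ) = ∫ τ, δ τ ∂μ := intervalIntegral.integral_of_le h0T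
  have hIsum : (∫ τ in (0:ℝ)..T, (uhat + δ) τ)
      = (∫ τ in (0:ℝ)..T, uhat τ) + ∫ τ, δ τ ∂μ := by
    rw [intervalIntegral.integral_of_le h0T, intervalIntegral.integral_of_le h0T, ← hμ,
      ← integral_add intuhat intδ]
    rfl
  have hsplit : (∫ t in (0:ℝ)..T, (1/2 * ((uhat + δ) t)^2 + γ * Real.exp t * ((uhat + δ) t)))
      = (∫ t in (0:ℝ)..T, (1/2 * (uhat t)^2 + γ * Real.exp t * uhat t))
        + ((1/2) * (∫ t, δ t ^ 2 ∂μ) + ∫ t, (uhat t + γ * Real.exp t) * δ t ∂μ) := by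
    rw [intervalIntegral.integral_of_le h0T, intervalIntegral.integral_of_le h0T, ← hμ,
      ← MeasureTheory.integral_const_mul (1/2), ← integral_add (intδsq.const_mul (1/2)) intgδ,
      ← integral_add intf1 intf2]
    refine integral_congr_ae (Filter.Eventually.of_forall fun t => ?_)
    simp only [Pi.add_apply]; ring
  have hcoef : 0 ≤ γ * Real.exp T - c - 1 := by rw [hc]; linarith
  have hnegδ : 0 ≤ -∫ τ in (0:ℝ)..T, δ τ := by linarith
  constructor
  · rw [hJ (uhat + δ), hJ uhat, hsplit, hIsum, hIδ]
    nlinarith [hgδ, hδsqnn]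
  · nlinarith [mul_nonneg hcoef hnegδ]
end

section
/- Let γ > 0, let t₀ > 0 satisfy (t₀ - 1)e^{t₀} = 1/γ - 1, and let T > t₀ satisfy γ e^T ≥ 1 + γ e^{t₀}. Define û(t) = γ(e^{t₀} - e^t) for t ∈ (0, t₀] and û(t) = 0 for t > t₀. Then û is the unique minimizer over u ∈ L²(0,T) of the functional ∫₀^T [½|u(t)|² + |u(t)| + γ|y(t)|] dt, where y(t) = e^t(-1 + ∫₀^t u(τ) dτ). Moreover the optimal state ŷ generated by û satisfies ŷ(t) = 0 for all t ∈ [t₀, T]. -/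
open MeasureTheory intervalIntegral

section Aux

private lemma aux_ptwise_pos (w v b : ℝ) (hw : 0 ≤ w) (hb : b = -w - 1) :
    1/2*w^2 + |w| + b*w + 1/2*(v-w)^2 ≤ 1/2*v^2 + |v| + b*v := by
  subst hb; rw [abs_of_nonneg hw]; nlinarith [le_abs_self v]

private lemma aux_ptwise_zero (b v : ℝ) (hb1 : -1 ≤ b) (hb2 : b ≤ 0) :
    (0:ℝ) ≤ |v| + b*v := by
  rcases le_or_gt 0 v with h|h
  · nlinarith [abs_of_nonneg h]
  · nlinarith [abs_of_neg h]

private lemma aux_exp_conv (t t₀ : ℝ) : Real.exp t₀ * ((t - t₀) + 1) ≤ Real.exp t := by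
  have h := mul_le_mul_of_nonneg_left (Real.add_one_le_exp (t - t₀)) (Real.exp_pos t₀).le
  rwa [← Real.exp_add, add_sub_cancel] at h

end Aux

set_option maxHeartbeats 1000000 in
/-- With `t₀ > 0` solving `(t₀-1)e^{t₀} = 1/γ - 1` and `T > t₀`
with `γe^T ≥ 1 + γe^{t₀}`, the control `uhat(t) = γ(e^{t₀} - e^t)` for
`t ≤ t₀`, `uhat(t) = 0` for `t > t₀`, is the unique (up to a.e. equality)
minimizer over `u ∈ L²(0,T)` of `∫₀^T [½|u|² + |u| + γ|y|] dt`, where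
`y(t) = e^t(-1 + ∫₀^t u)`; moreover the state generated by `uhat` vanishes on
`[t₀, T]`. -/
theorem stmt_6 (γ t₀ T : ℝ) (hγ : 0 < γ) (ht₀ : 0 < t₀)
    (heq : (t₀ - 1) * Real.exp t₀ = 1 / γ - 1)
    (hT : t₀ < T)
    (hT' : 1 + γ * Real.exp t₀ ≤ γ * Real.exp T)
    (uhat : ℝ → ℝ)
    (huhat : ∀ t, uhat t = if t ≤ t₀ then γ * (Real.exp t₀ - Real.exp t) else 0)
    (J : (ℝ → ℝ) → ℝ)
    (hJ : ∀ u : ℝ → ℝ,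
      J u = ∫ t in (0:ℝ)..T,
        (1/2 * |u t|^2 + |u t|
          + γ * |Real.exp t * (-1 + ∫ τ in (0:ℝ)..t, u τ)|)) :
    (∀ u : ℝ → ℝ, MemLp u 2 (volume.restrict (Set.Ioc (0:ℝ) T)) →
      J uhat ≤ J u) ∧
    (∀ u : ℝ → ℝ, MemLp u 2 (volume.restrict (Set.Ioc (0:ℝ) T)) →
      J u = J uhat → u =ᵐ[volume.restrict (Set.Ioc (0:ℝ) T)] uhat) ∧
    (∀ t ∈ Set.Icc t₀ T,
      Real.exp t * (-1 + ∫ τ in (0:ℝ)..t, uhat τ) = 0) := by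
  have hT0 : (0:ℝ) < T := ht₀.trans hT
  have ht₀T : t₀ ≤ T := hT.le
  set μ : Measure ℝ := volume.restrict (Set.Ioc (0:ℝ) T) with hμdef
  haveI : IsFiniteMeasure μ := by
    constructor
    rw [hμdef, Measure.restrict_apply_univ, Real.volume_Ioc]
    exact ENNReal.ofReal_lt_top
  have hmem : ∀ᵐ t ∂μ, t ∈ Set.Ioc (0:ℝ) T := by
    rw [hμdef]; exact ae_restrict_mem measurableSet_Ioc
  -- continuity of uhat
  have hucont : Continuous uhat := by
    have : uhat = fun t => if t ≤ t₀ then γ * (Real.exp t₀ - Real.exp t) else 0 :=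
      funext huhat
    rw [this]
    apply Continuous.if_le (by continuity) continuous_const continuous_id continuous_const
    intro x hx
    simp only [id] at hx
    rw [hx]; simp
  -- primitive of uhat
  have hUle : ∀ t : ℝ, t ≤ t₀ →
      (∫ τ in (0:ℝ)..t, uhat τ) = γ * (t * Real.exp t₀ - Real.exp t + 1) := by
    intro t ht
    have h1 : Set.EqOn uhat (fun τ => γ * Real.exp t₀ - γ * Real.exp τ) (Set.uIcc 0 t) := by
      intro τ hτ
      have hτ' : τ ≤ t₀ := by
        rcases le_total 0 t with h|h
        · rw [Set.uIcc_of_le h] at hτ; exact hτ.2.trans ht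
        · rw [Set.uIcc_of_ge h] at hτ; exact hτ.2.trans (by linarith [ht₀.le])
      rw [huhat τ, if_pos hτ']; ring
    rw [intervalIntegral.integral_congr h1,
      intervalIntegral.integral_sub (f := fun _ => γ * Real.exp t₀) (g := fun x => γ * Real.exp x) (intervalIntegrable_const)
        ((continuous_const.mul Real.continuous_exp).intervalIntegrable 0 t),
      intervalIntegral.integral_const, intervalIntegral.integral_const_mul, integral_exp]
    simp; ring
  have hUone : ∀ t : ℝ, t₀ ≤ t → (∫ τ in (0:ℝ)..t, uhat τ) = 1 := by
    intro t ht
    have h0 : (∫ τ in (0:ℝ)..t₀, uhat τ) = 1 := by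
      rw [hUle t₀ le_rfl]
      have h1 : t₀ * Real.exp t₀ - Real.exp t₀ + 1 = 1/γ := by nlinarith [heq]
      rw [h1]; field_simp
    have h2 : (∫ τ in t₀..t, uhat τ) = 0 := by
      have h1 : Set.EqOn uhat (fun _ => (0:ℝ)) (Set.uIcc t₀ t) := by
        intro τ hτ
        rw [Set.uIcc_of_le ht] at hτ
        rcases eq_or_lt_of_le hτ.1 with h|h
        · rw [huhat τ, if_pos h.symm.le, ← h]; ring
        · rw [huhat τ, if_neg (not_le.mpr h)]
      rw [intervalIntegral.integral_congr h1]; simp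
    rw [← intervalIntegral.integral_add_adjacent_intervals
      (hucont.intervalIntegrable 0 t₀) (hucont.intervalIntegrable t₀ t), h0, h2]
    ring
  -- Part 3
  have part3 : ∀ t ∈ Set.Icc t₀ T,
      Real.exp t * (-1 + ∫ τ in (0:ℝ)..t, uhat τ) = 0 := by
    intro t ht
    rw [hUone t ht.1]; ring
  -- sign of the state of uhat
  have hyneg : ∀ t : ℝ, 0 ≤ t → t ≤ t₀ →
      Real.exp t * (-1 + ∫ τ in (0:ℝ)..t, uhat τ) ≤ 0 := by
    intro t ht0 ht
    rw [hUle t ht]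
    have hconv := aux_exp_conv t t₀
    have h1 : γ * (t * Real.exp t₀ - Real.exp t + 1) ≤ 1 := by
      have h2 : t * Real.exp t₀ - Real.exp t + 1 ≤ t₀ * Real.exp t₀ - Real.exp t₀ + 1 := by
        nlinarith
      have h3 : t₀ * Real.exp t₀ - Real.exp t₀ + 1 = 1/γ := by nlinarith [heq]
      calc γ * (t * Real.exp t₀ - Real.exp t + 1)
          ≤ γ * (1/γ) := by
            rw [← h3]; exact mul_le_mul_of_nonneg_left h2 hγ.le
        _ = 1 := by field_simp
    have := Real.exp_pos t
    nlinarith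
  -- the multipliers
  set c : ℝ := -(γ * (Real.exp T - Real.exp t₀))⁻¹ with hcdef
  set W : ℝ → ℝ := fun t => if t ≤ t₀ then (-1 : ℝ) else c with hWdef
  set b : ℝ → ℝ := fun τ => if τ ≤ t₀ then γ * (Real.exp τ - Real.exp t₀) - 1
    else -((Real.exp T - Real.exp τ) / (Real.exp T - Real.exp t₀)) with hbdef
  have hWval : ∀ t, W t = if t ≤ t₀ then (-1:ℝ) else c := fun _ => rfl
  have hbval : ∀ τ, b τ = if τ ≤ t₀ then γ * (Real.exp τ - Real.exp t₀) - 1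
    else -((Real.exp T - Real.exp τ) / (Real.exp T - Real.exp t₀)) := fun _ => rfl
  have hD : 0 < Real.exp T - Real.exp t₀ := by
    have := Real.exp_lt_exp.mpr hT; linarith
  have hγD : 1 ≤ γ * (Real.exp T - Real.exp t₀) := by nlinarith
  have hγD0 : 0 < γ * (Real.exp T - Real.exp t₀) := by linarith
  have hWle : ∀ t, |W t| ≤ 1 := by
    intro t
    rw [hWval]
    split_ifs with h
    · simp
    · rw [hcdef, abs_neg, abs_inv, abs_of_pos hγD0]
      rw [inv_le_one_iff₀]
      right; exact hγD
  have hWm : Measurable W := by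
    rw [hWdef]; exact Measurable.ite measurableSet_Iic measurable_const measurable_const
  have hbm : Measurable b := by
    rw [hbdef]
    exact Measurable.ite measurableSet_Iic
      ((measurable_id.exp.sub measurable_const).const_mul γ |>.sub measurable_const)
      (((measurable_const.sub measurable_id.exp).div measurable_const).neg)
  have hbbound : ∀ τ : ℝ, τ ≤ T → |b τ| ≤ 1 + γ * Real.exp t₀ := by
    intro τ hτ
    rw [hbval]
    have he1 := Real.exp_pos τ
    have he2 := Real.exp_pos t₀
    split_ifs with h
    · have : Real.exp τ ≤ Real.exp t₀ := Real.exp_le_exp.mpr h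
      rw [abs_le]; constructor <;> nlinarith
    · have h1 : Real.exp t₀ ≤ Real.exp τ := Real.exp_le_exp.mpr (le_of_not_ge h)
      have h2 : Real.exp τ ≤ Real.exp T := Real.exp_le_exp.mpr hτ
      rw [abs_le]; constructor
      · rw [neg_le, neg_neg, div_le_iff₀ hD]; nlinarith
      · rw [neg_le]; have : 0 ≤ (Real.exp T - Real.exp τ) / (Real.exp T - Real.exp t₀) :=
          div_nonneg (by linarith) hD.le
        nlinarith
  -- pointwise inequality
  have hP : ∀ τ ∈ Set.Ioc (0:ℝ) T, ∀ v : ℝ,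
      1/2 * uhat τ^2 + |uhat τ| + b τ * uhat τ + 1/2 * (v - uhat τ)^2
        ≤ 1/2 * v^2 + |v| + b τ * v := by
    intro τ hτ v
    rcases le_or_gt τ t₀ with h|h
    · have huv : uhat τ = γ * (Real.exp t₀ - Real.exp τ) := by rw [huhat τ, if_pos h]
      have hbv : b τ = -(uhat τ) - 1 := by
        rw [hbval, if_pos h, huv]; ring
      exact aux_ptwise_pos _ _ _
        (by rw [huv]; have := Real.exp_le_exp.mpr h; nlinarith) hbv
    · have huv : uhat τ = 0 := by rw [huhat τ, if_neg (not_le.mpr h)]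
      have hbv : b τ = -((Real.exp T - Real.exp τ) / (Real.exp T - Real.exp t₀)) := by
        rw [hbval, if_neg (not_le.mpr h)]
      have h1 : Real.exp t₀ ≤ Real.exp τ := Real.exp_le_exp.mpr h.le
      have h2 : Real.exp τ ≤ Real.exp T := Real.exp_le_exp.mpr hτ.2
      have hb1 : -1 ≤ b τ := by
        rw [hbv, neg_le, neg_neg, div_le_one hD]; linarith
      have hb2 : b τ ≤ 0 := by
        rw [hbv, neg_le, neg_zero]; exact div_nonneg (by linarith) hD.le
      have := aux_ptwise_zero (b τ) v hb1 hb2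
      rw [huv]; simp only [abs_zero]; nlinarith
  -- integrability of W * exp on intervals
  have hWexpInt : ∀ s1 s2 : ℝ, IntegrableOn (fun t => W t * Real.exp t) (Set.Ioc s1 s2) volume := by
    intro s1 s2
    apply Integrable.bdd_mul (c := 1)
      ((Real.continuous_exp.continuousOn.integrableOn_Icc).mono_set Set.Ioc_subset_Icc_self)
      hWm.aestronglyMeasurable
    exact Filter.Eventually.of_forall fun t => by rw [Real.norm_eq_abs]; exact hWle t
  have hWexpμ : Integrable (fun t => W t * Real.exp t) μ := by
    rw [hμdef]; exact hWexpInt 0 T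
  have hγne : γ ≠ 0 := hγ.ne'
  have hDne : Real.exp T - Real.exp t₀ ≠ 0 := hD.ne'
  -- the adjoint-type computation
  have hIocT : ∫ t in Set.Ioc t₀ T, (W t * Real.exp t) = c * (Real.exp T - Real.exp t₀) := by
    rw [setIntegral_congr_fun measurableSet_Ioc
      (g := fun t => c * Real.exp t) (fun t ht => by rw [hWval, if_neg (not_le.mpr ht.1)]),
      ← integral_of_le ht₀T, intervalIntegral.integral_const_mul, integral_exp]
  have hG : ∀ τ ∈ Set.Ioc (0:ℝ) T, γ * ∫ t in Set.Ioc τ T, (W t * Real.exp t) = b τ := by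
    intro τ hτ
    rcases le_or_gt τ t₀ with h|h
    · have h1 : ∫ t in Set.Ioc τ t₀, (W t * Real.exp t) = -(Real.exp t₀ - Real.exp τ) := by
        rw [setIntegral_congr_fun measurableSet_Ioc
          (g := fun t => -Real.exp t) (fun t ht => by rw [hWval, if_pos ht.2]; ring),
          ← integral_of_le h, intervalIntegral.integral_neg, integral_exp]
      have hsplit : ∫ t in Set.Ioc τ T, (W t * Real.exp t)
          = (∫ t in Set.Ioc τ t₀, (W t * Real.exp t))
            + ∫ t in Set.Ioc t₀ T, (W t * Real.exp t) := by
        rw [← MeasureTheory.setIntegral_union (Set.Ioc_disjoint_Ioc_of_le le_rfl) measurableSet_Ioc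
          (hWexpInt τ t₀) (hWexpInt t₀ T), Set.Ioc_union_Ioc_eq_Ioc h ht₀T]
      rw [hsplit, h1, hIocT, hbval, if_pos h, hcdef]
      field_simp
      ring
    · have h1 : ∫ t in Set.Ioc τ T, (W t * Real.exp t) = c * (Real.exp T - Real.exp τ) := by
        rw [setIntegral_congr_fun measurableSet_Ioc
          (g := fun t => c * Real.exp t)
          (fun t ht => by rw [hWval, if_neg (not_le.mpr (h.trans ht.1))]),
          ← integral_of_le hτ.2, intervalIntegral.integral_const_mul, integral_exp]
      rw [h1, hbval, if_neg (not_le.mpr h), hcdef]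
      field_simp
  -- the key identity for J
  have key : ∀ u : ℝ → ℝ, MemLp u 2 μ →
      J u = ((∫ t, (1/2 * u t^2 + |u t| + b t * u t) ∂μ)
          - γ * ∫ t, (W t * Real.exp t) ∂μ)
        + γ * ∫ t, (|Real.exp t * (-1 + ∫ τ in (0:ℝ)..t, u τ)|
            - W t * (Real.exp t * (-1 + ∫ τ in (0:ℝ)..t, u τ))) ∂μ := by
    intro u hu
    have hui : Integrable u μ := hu.integrable one_le_two
    have husq : Integrable (fun t => u t^2) μ := hu.integrable_sq
    have hicc : IntegrableOn u (Set.Icc 0 T) volume := by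
      rw [IntegrableOn, Measure.restrict_congr_set MeasureTheory.Ioc_ae_eq_Icc.symm, ← hμdef]
      exact hui
    have hYcont : ContinuousOn (fun t => Real.exp t * (-1 + ∫ τ in (0:ℝ)..t, u τ))
        (Set.Icc 0 T) := by
      have h1 : ContinuousOn (fun x => ∫ t in Set.Ioc 0 x, u t) (Set.Icc 0 T) :=
        continuousOn_primitive hicc
      have h2 : ContinuousOn (fun x => ∫ t in (0:ℝ)..x, u t) (Set.Icc 0 T) :=
        h1.congr fun x hx => integral_of_le hx.1
      exact Real.continuous_exp.continuousOn.mul (continuousOn_const.add h2)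
    have hYintμ : Integrable (fun t => Real.exp t * (-1 + ∫ τ in (0:ℝ)..t, u τ)) μ := by
      rw [hμdef]
      exact hYcont.integrableOn_Icc.mono_set Set.Ioc_subset_Icc_self
    have habsY : Integrable (fun t => |Real.exp t * (-1 + ∫ τ in (0:ℝ)..t, u τ)|) μ :=
      hYintμ.abs
    have hWY : Integrable
        (fun t => W t * (Real.exp t * (-1 + ∫ τ in (0:ℝ)..t, u τ))) μ :=
      hYintμ.bdd_mul hWm.aestronglyMeasurable
        (Filter.Eventually.of_forall fun t => by rw [Real.norm_eq_abs]; exact hWle t)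
    have hbu : Integrable (fun t => b t * u t) μ :=
      hui.bdd_mul hbm.aestronglyMeasurable
        (hmem.mono fun τ hτ => by rw [Real.norm_eq_abs]; exact hbbound τ hτ.2)
    have hWeU : Integrable (fun t => W t * Real.exp t * (∫ τ in (0:ℝ)..t, u τ)) μ := by
      apply (hWY.add hWexpμ).congr
      exact Filter.Eventually.of_forall fun t => by simp only [Pi.add_apply]; ring
    -- Fubini
    have hFub : ∫ t, (W t * Real.exp t * (∫ τ in (0:ℝ)..t, u τ)) ∂μ
        = ∫ τ, (u τ * ∫ t in Set.Ioc τ T, (W t * Real.exp t)) ∂μ := by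
      have hSm : MeasurableSet {q : ℝ × ℝ | 0 < q.2 ∧ q.2 ≤ q.1} :=
        (measurableSet_lt measurable_const measurable_snd).inter
          (measurableSet_le measurable_snd measurable_fst)
      set K : ℝ × ℝ → ℝ := fun p => (W p.1 * Real.exp p.1)
        * Set.indicator {q : ℝ × ℝ | 0 < q.2 ∧ q.2 ≤ q.1} (fun q => u q.2) p with hKdef
      have hKsm : AEStronglyMeasurable K (μ.prod μ) := by
        apply AEStronglyMeasurable.mul
        · exact ((hWm.mul Real.measurable_exp).comp measurable_fst).aestronglyMeasurable
        · exact (hui.1.comp_snd).indicator hSm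
      have haeT : ∀ᵐ p ∂(μ.prod μ), p.1 ∈ Set.Ioc (0:ℝ) T := by
        rw [ae_iff]
        have hset : {p : ℝ × ℝ | ¬ p.1 ∈ Set.Ioc (0:ℝ) T}
            = (Set.Ioc (0:ℝ) T)ᶜ ×ˢ (Set.univ : Set ℝ) := by
          ext p; simp [Set.mem_prod]
        rw [hset, Measure.prod_prod]
        have h0 : μ ((Set.Ioc (0:ℝ) T)ᶜ) = 0 := by
          rw [hμdef, Measure.restrict_apply measurableSet_Ioc.compl]
          simp
        rw [h0, zero_mul]
      have hKint : Integrable K (μ.prod μ) := by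
        have hgsm : AEStronglyMeasurable (fun p : ℝ × ℝ => Real.exp T * |u p.2|)
            (μ.prod μ) := (hui.abs.1.comp_snd).const_mul _
        have hgint : Integrable (fun p : ℝ × ℝ => Real.exp T * |u p.2|) (μ.prod μ) := by
          rw [MeasureTheory.integrable_prod_iff hgsm]
          refine ⟨Filter.Eventually.of_forall fun x => hui.abs.const_mul _, ?_⟩
          exact integrable_const (∫ y, ‖Real.exp T * |u y|‖ ∂μ)
        apply hgint.mono' hKsm
        filter_upwards [haeT] with p hp
        rw [Real.norm_eq_abs, abs_mul]
        have h1 : |W p.1 * Real.exp p.1| ≤ Real.exp T := by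
          rw [abs_mul, abs_of_pos (Real.exp_pos _)]
          calc |W p.1| * Real.exp p.1 ≤ 1 * Real.exp p.1 :=
                mul_le_mul_of_nonneg_right (hWle _) (Real.exp_pos _).le
            _ ≤ Real.exp T := by rw [one_mul]; exact Real.exp_le_exp.mpr hp.2
        have h2 : |Set.indicator {q : ℝ × ℝ | 0 < q.2 ∧ q.2 ≤ q.1} (fun q => u q.2) p|
            ≤ |u p.2| := by
          by_cases hmem2 : p ∈ {q : ℝ × ℝ | 0 < q.2 ∧ q.2 ≤ q.1}
          · rw [Set.indicator_of_mem hmem2]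
          · rw [Set.indicator_of_notMem hmem2]; simp
        exact mul_le_mul h1 h2 (abs_nonneg _) (Real.exp_pos _).le
      have hswap := MeasureTheory.integral_integral_swap (f := fun t τ => K (t, τ)) hKint
      have hL : ∀ t ∈ Set.Ioc (0:ℝ) T,
          (∫ τ, K (t, τ) ∂μ) = W t * Real.exp t * (∫ τ in (0:ℝ)..t, u τ) := by
        intro t ht
        have h1 : (fun τ => K (t, τ))
            = fun τ => (W t * Real.exp t) * (Set.Ioc (0:ℝ) t).indicator u τ := by
          funext τ
          rw [hKdef]
          dsimp only
          by_cases hc : τ ∈ Set.Ioc (0:ℝ) t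
          · rw [Set.indicator_of_mem
                (show ((t, τ) : ℝ × ℝ) ∈ {q : ℝ × ℝ | 0 < q.2 ∧ q.2 ≤ q.1} from
                  ⟨hc.1, hc.2⟩),
              Set.indicator_of_mem hc]
          · rw [Set.indicator_of_notMem
                (show ((t, τ) : ℝ × ℝ) ∉ {q : ℝ × ℝ | 0 < q.2 ∧ q.2 ≤ q.1} from
                  fun hq => hc ⟨hq.1, hq.2⟩),
              Set.indicator_of_notMem hc]
        rw [h1, MeasureTheory.integral_const_mul]
        congr 1
        rw [hμdef, MeasureTheory.integral_indicator measurableSet_Ioc,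
          Measure.restrict_restrict measurableSet_Ioc,
          Set.inter_eq_left.mpr (Set.Ioc_subset_Ioc_right ht.2), integral_of_le ht.1.le]
      have hR : ∀ τ ∈ Set.Ioc (0:ℝ) T,
          (∫ t, K (t, τ) ∂μ) = u τ * ∫ t in Set.Ioc τ T, (W t * Real.exp t) := by
        intro τ hτ
        have h1 : (fun t => K (t, τ))
            = fun t => u τ * ((Set.Ici τ).indicator (fun t => W t * Real.exp t) t) := by
          funext t
          rw [hKdef]
          dsimp only
          by_cases hc : τ ≤ t
          · rw [Set.indicator_of_mem
                (show ((t, τ) : ℝ × ℝ) ∈ {q : ℝ × ℝ | 0 < q.2 ∧ q.2 ≤ q.1} from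
                  ⟨hτ.1, hc⟩),
              Set.indicator_of_mem (Set.mem_Ici.mpr hc)]
            ring
          · rw [Set.indicator_of_notMem
                (show ((t, τ) : ℝ × ℝ) ∉ {q : ℝ × ℝ | 0 < q.2 ∧ q.2 ≤ q.1} from
                  fun hq => hc hq.2),
              Set.indicator_of_notMem (fun hq => hc (Set.mem_Ici.mp hq))]
            ring
        rw [h1, MeasureTheory.integral_const_mul]
        congr 1
        rw [hμdef, MeasureTheory.integral_indicator measurableSet_Ici,
          Measure.restrict_restrict measurableSet_Ici]
        have hIcc : Set.Ici τ ∩ Set.Ioc (0:ℝ) T = Set.Icc τ T := by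
          ext x
          simp only [Set.mem_inter_iff, Set.mem_Ici, Set.mem_Ioc, Set.mem_Icc]
          constructor
          · rintro ⟨h1, _, h3⟩; exact ⟨h1, h3⟩
          · rintro ⟨h1, h2⟩; exact ⟨h1, hτ.1.trans_le h1, h2⟩
        rw [hIcc, integral_Icc_eq_integral_Ioc]
      have c1 : ∫ t, (W t * Real.exp t * (∫ τ in (0:ℝ)..t, u τ)) ∂μ
          = ∫ t, (∫ τ, K (t, τ) ∂μ) ∂μ :=
        integral_congr_ae (hmem.mono fun t ht => (hL t ht).symm)
      have c2 : ∫ τ, (∫ t, K (t, τ) ∂μ) ∂μ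
          = ∫ τ, (u τ * ∫ t in Set.Ioc τ T, (W t * Real.exp t)) ∂μ := by
        exact integral_congr_ae (hmem.mono fun τ hτ => hR τ hτ)
      exact c1.trans (hswap.trans c2)
    -- the W-part of the cost
    have hKey2 : γ * ∫ t, (W t * (Real.exp t * (-1 + ∫ τ in (0:ℝ)..t, u τ))) ∂μ
        = (∫ τ, (b τ * u τ) ∂μ) - γ * ∫ t, (W t * Real.exp t) ∂μ := by
      have h1 : ∫ t, (W t * (Real.exp t * (-1 + ∫ τ in (0:ℝ)..t, u τ))) ∂μ
          = (∫ t, (W t * Real.exp t * (∫ τ in (0:ℝ)..t, u τ)) ∂μ)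
            - ∫ t, (W t * Real.exp t) ∂μ := by
        rw [← MeasureTheory.integral_sub hWeU hWexpμ]
        exact integral_congr_ae (Filter.Eventually.of_forall fun t => by ring)
      rw [h1, hFub, mul_sub]
      congr 1
      rw [← MeasureTheory.integral_const_mul]
      apply MeasureTheory.integral_congr_ae (hmem.mono fun τ hτ => ?_)
      rw [← hG τ hτ]; ring
    -- assembly
    have hA : Integrable (fun t => 1/2 * u t^2 + |u t|) μ := (husq.const_mul _).add hui.abs
    have hgabs : Integrable
        (fun t => γ * |Real.exp t * (-1 + ∫ τ in (0:ℝ)..t, u τ)|) μ := habsY.const_mul γ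
    have e1 : J u = (∫ t, (1/2 * u t^2 + |u t|) ∂μ)
        + γ * ∫ t, |Real.exp t * (-1 + ∫ τ in (0:ℝ)..t, u τ)| ∂μ := by
      rw [hJ u, integral_of_le hT0.le, ← hμdef]
      rw [MeasureTheory.integral_congr_ae (μ := μ)
        (f := fun t => 1/2 * |u t|^2 + |u t|
          + γ * |Real.exp t * (-1 + ∫ τ in (0:ℝ)..t, u τ)|)
        (g := fun t => 1/2 * u t^2 + |u t|
          + γ * |Real.exp t * (-1 + ∫ τ in (0:ℝ)..t, u τ)|)
        (Filter.Eventually.of_forall fun t => by simp only [sq_abs])]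
      rw [MeasureTheory.integral_add hA hgabs, MeasureTheory.integral_const_mul]
    have e2 : ∫ t, |Real.exp t * (-1 + ∫ τ in (0:ℝ)..t, u τ)| ∂μ
        = (∫ t, (W t * (Real.exp t * (-1 + ∫ τ in (0:ℝ)..t, u τ))) ∂μ)
          + ∫ t, (|Real.exp t * (-1 + ∫ τ in (0:ℝ)..t, u τ)|
              - W t * (Real.exp t * (-1 + ∫ τ in (0:ℝ)..t, u τ))) ∂μ := by
      have hsub : Integrable (fun t => |Real.exp t * (-1 + ∫ τ in (0:ℝ)..t, u τ)|
          - W t * (Real.exp t * (-1 + ∫ τ in (0:ℝ)..t, u τ))) μ :=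
        (habsY.sub hWY).congr (Filter.Eventually.of_forall fun t => rfl)
      rw [← MeasureTheory.integral_add hWY hsub]
      exact MeasureTheory.integral_congr_ae
        (Filter.Eventually.of_forall fun t => by ring)
    have e3 : ∫ t, (1/2 * u t^2 + |u t| + b t * u t) ∂μ
        = (∫ t, (1/2 * u t^2 + |u t|) ∂μ) + ∫ τ, (b τ * u τ) ∂μ := by
      rw [← MeasureTheory.integral_add hA hbu]
    rw [e1, e2, e3, mul_add, hKey2]
    ring
  -- uhat is in L²
  have hub : ∀ t, |uhat t| ≤ γ * Real.exp t₀ := by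
    intro t
    rw [huhat t]
    split_ifs with h
    · have h1 : Real.exp t ≤ Real.exp t₀ := Real.exp_le_exp.mpr h
      have h2 := Real.exp_pos t
      rw [abs_of_nonneg (by nlinarith)]
      nlinarith
    · rw [abs_zero]; positivity
  have huhat2 : MemLp uhat 2 μ := by
    refine MemLp.mono_exponent ?_ le_top
    exact memLp_top_of_bound hucont.aestronglyMeasurable (γ * Real.exp t₀)
      (Filter.Eventually.of_forall fun t => by rw [Real.norm_eq_abs]; exact hub t)
  -- the master inequality
  have master : ∀ u : ℝ → ℝ, MemLp u 2 μ →
      J uhat + 1/2 * ∫ t, ((u t - uhat t)^2) ∂μ ≤ J u := by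
    intro u hu
    have hui : Integrable u μ := hu.integrable one_le_two
    have husq : Integrable (fun t => u t^2) μ := hu.integrable_sq
    have huhi : Integrable uhat μ := huhat2.integrable one_le_two
    have huhsq : Integrable (fun t => uhat t^2) μ := huhat2.integrable_sq
    have hbu : Integrable (fun t => b t * u t) μ :=
      hui.bdd_mul hbm.aestronglyMeasurable
        (hmem.mono fun τ hτ => by rw [Real.norm_eq_abs]; exact hbbound τ hτ.2)
    have hbuh : Integrable (fun t => b t * uhat t) μ :=
      huhi.bdd_mul hbm.aestronglyMeasurable
        (hmem.mono fun τ hτ => by rw [Real.norm_eq_abs]; exact hbbound τ hτ.2)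
    have huuh : Integrable (fun t => uhat t * u t) μ :=
      hui.bdd_mul hucont.aestronglyMeasurable
        (Filter.Eventually.of_forall fun t => by rw [Real.norm_eq_abs]; exact hub t)
    have hsq : Integrable (fun t => (u t - uhat t)^2) μ := by
      have h0 : Integrable (fun t => u t^2 - 2 * (uhat t * u t) + uhat t^2) μ :=
        (husq.sub (huuh.const_mul 2)).add huhsq
      exact h0.congr (Filter.Eventually.of_forall fun t => by ring)
    have hk1 := key u hu
    have hk2 := key uhat huhat2
    -- vanishing of the residual for uhat
    have hRu : ∫ t, (|Real.exp t * (-1 + ∫ τ in (0:ℝ)..t, uhat τ)|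
        - W t * (Real.exp t * (-1 + ∫ τ in (0:ℝ)..t, uhat τ))) ∂μ = 0 := by
      have h0 : ∀ t ∈ Set.Ioc (0:ℝ) T,
          |Real.exp t * (-1 + ∫ τ in (0:ℝ)..t, uhat τ)|
            - W t * (Real.exp t * (-1 + ∫ τ in (0:ℝ)..t, uhat τ)) = 0 := by
        intro t ht
        rcases le_or_gt t t₀ with h|h
        · rw [hWval, if_pos h, abs_of_nonpos (hyneg t ht.1.le h)]; ring
        · rw [hUone t h.le]
          norm_num
      calc ∫ t, (|Real.exp t * (-1 + ∫ τ in (0:ℝ)..t, uhat τ)|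
            - W t * (Real.exp t * (-1 + ∫ τ in (0:ℝ)..t, uhat τ))) ∂μ
          = ∫ t, (0:ℝ) ∂μ :=
            MeasureTheory.integral_congr_ae (hmem.mono fun t ht => h0 t ht)
        _ = 0 := integral_zero _ _
    -- nonnegativity of the residual for u
    have hRnn : 0 ≤ ∫ t, (|Real.exp t * (-1 + ∫ τ in (0:ℝ)..t, u τ)|
        - W t * (Real.exp t * (-1 + ∫ τ in (0:ℝ)..t, u τ))) ∂μ := by
      apply MeasureTheory.integral_nonneg
      intro t
      have h1 : W t * (Real.exp t * (-1 + ∫ τ in (0:ℝ)..t, u τ))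
          ≤ |Real.exp t * (-1 + ∫ τ in (0:ℝ)..t, u τ)| := by
        calc W t * (Real.exp t * (-1 + ∫ τ in (0:ℝ)..t, u τ))
            ≤ |W t * (Real.exp t * (-1 + ∫ τ in (0:ℝ)..t, u τ))| := le_abs_self _
          _ = |W t| * |Real.exp t * (-1 + ∫ τ in (0:ℝ)..t, u τ)| := abs_mul _ _
          _ ≤ 1 * |Real.exp t * (-1 + ∫ τ in (0:ℝ)..t, u τ)| :=
              mul_le_mul_of_nonneg_right (hWle t) (abs_nonneg _)
          _ = |Real.exp t * (-1 + ∫ τ in (0:ℝ)..t, u τ)| := one_mul _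
      simp only [Pi.zero_apply]
      linarith
    -- comparison of the quadratic parts
    have hcomp : (∫ t, (1/2 * uhat t^2 + |uhat t| + b t * uhat t) ∂μ)
        + 1/2 * ∫ t, ((u t - uhat t)^2) ∂μ
        ≤ ∫ t, (1/2 * u t^2 + |u t| + b t * u t) ∂μ := by
      have hAh : Integrable (fun t => 1/2 * uhat t^2 + |uhat t| + b t * uhat t) μ :=
        ((huhsq.const_mul _).add huhi.abs).add hbuh
      have hAu : Integrable (fun t => 1/2 * u t^2 + |u t| + b t * u t) μ :=
        ((husq.const_mul _).add hui.abs).add hbu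
      have hhalf : Integrable (fun t => 1/2 * (u t - uhat t)^2) μ := hsq.const_mul _
      have hAhalf : Integrable (fun t => 1/2 * uhat t^2 + |uhat t| + b t * uhat t
          + 1/2 * (u t - uhat t)^2) μ :=
        (hAh.add hhalf).congr (Filter.Eventually.of_forall fun t => rfl)
      have hsplit : ∫ t, (1/2 * uhat t^2 + |uhat t| + b t * uhat t
            + 1/2 * (u t - uhat t)^2) ∂μ
          = (∫ t, (1/2 * uhat t^2 + |uhat t| + b t * uhat t) ∂μ)
            + 1/2 * ∫ t, ((u t - uhat t)^2) ∂μ := by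
        rw [← MeasureTheory.integral_const_mul, ← MeasureTheory.integral_add hAh hhalf]
      have h3 := MeasureTheory.integral_mono_ae hAhalf hAu
        (hmem.mono fun t ht => hP t ht (u t))
      rw [hsplit] at h3
      exact h3
    rw [hk1, hk2, hRu]
    have h4 : 0 ≤ γ * ∫ t, (|Real.exp t * (-1 + ∫ τ in (0:ℝ)..t, u τ)|
        - W t * (Real.exp t * (-1 + ∫ τ in (0:ℝ)..t, u τ))) ∂μ :=
      mul_nonneg hγ.le hRnn
    linarith
  refine ⟨?_, ?_, part3⟩
  · intro u hu
    have h1 := master u hu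
    have h2 : 0 ≤ ∫ t, ((u t - uhat t)^2) ∂μ :=
      integral_nonneg fun t => sq_nonneg _
    linarith
  · intro u hu hJu
    have h1 := master u hu
    have h2 : 0 ≤ ∫ t, ((u t - uhat t)^2) ∂μ :=
      integral_nonneg fun t => sq_nonneg _
    have hS0 : ∫ t, ((u t - uhat t)^2) ∂μ = 0 := by
      rw [hJu] at h1
      linarith
    have hui : Integrable u μ := hu.integrable one_le_two
    have husq : Integrable (fun t => u t^2) μ := hu.integrable_sq
    have huhi : Integrable uhat μ := huhat2.integrable one_le_two
    have huhsq : Integrable (fun t => uhat t^2) μ := huhat2.integrable_sq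
    have huuh : Integrable (fun t => uhat t * u t) μ :=
      hui.bdd_mul hucont.aestronglyMeasurable
        (Filter.Eventually.of_forall fun t => by rw [Real.norm_eq_abs]; exact hub t)
    have hsq : Integrable (fun t => (u t - uhat t)^2) μ := by
      have h0 : Integrable (fun t => u t^2 - 2 * (uhat t * u t) + uhat t^2) μ :=
        (husq.sub (huuh.const_mul 2)).add huhsq
      exact h0.congr (Filter.Eventually.of_forall fun t => by ring)
    have h3 := (MeasureTheory.integral_eq_zero_iff_of_nonneg_ae
      (Filter.Eventually.of_forall fun t => sq_nonneg (u t - uhat t)) hsq).mp hS0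
    refine h3.mono fun t ht => ?_
    have ht' : (u t - uhat t)^2 = 0 := ht
    have := pow_eq_zero_iff (n := 2) (by norm_num) |>.mp ht'
    linarith [this]
end

section
/- Let f, g : [0,∞) → ℝ be continuous with f(t) > 0 and g(t) > 0 for all t ≥ 0, let T > 0, γ ≥ 1 and α < 0. Set F(t) = exp(∫₀^t f(s) ds), H(t) = ∫₀^t F(τ) dτ, and û(t) = max{0, -1 - γ g(t)H(t)/F(t) + λ g(t)/F(t)}, where λ > 0 is chosen such that ∫₀^T û(τ) g(τ)/F(τ) dτ = -α. Then û is the unique minimizer of the functional ∫₀^T [½|u(t)|² + |u(t)| + γ|y(t)|] dt over all u ∈ L²(0,T), where y(t) = F(t)[α + ∫₀^t (g(τ)/F(τ)) u(τ) dτ], subject to the terminal condition y(T) = 0. -/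
open MeasureTheory intervalIntegral Set

lemma swap_lemma (F h : ℝ → ℝ) (c : ℝ) (hc : 0 ≤ c)
    (hFc : ContinuousOn F (Set.Icc 0 c))
    (hh : MeasureTheory.IntegrableOn h (Set.Ioc 0 c)) :
    ∫ t in (0:ℝ)..c, F t * ∫ τ in (0:ℝ)..t, h τ
      = ∫ τ in (0:ℝ)..c, (∫ s in τ..c, F s) * h τ := by
  have hFint : IntegrableOn F (Set.Ioc 0 c) :=
    (hFc.integrableOn_compact isCompact_Icc).mono_set Ioc_subset_Icc_self
  set μ := volume.restrict (Set.Ioc (0:ℝ) c) with hμ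
  have base : Integrable (fun p : ℝ × ℝ => F p.1 * h p.2) (μ.prod μ) :=
    hFint.mul_prod hh
  have hmeas : MeasurableSet {p : ℝ × ℝ | p.2 ≤ p.1} :=
    measurableSet_le measurable_snd measurable_fst
  have hΦint : Integrable (Function.uncurry fun t τ => F t * (Set.Iic t).indicator h τ)
      (μ.prod μ) := by
    have := base.indicator hmeas
    refine this.congr (Filter.Eventually.of_forall ?_)
    rintro ⟨t, τ⟩
    by_cases hle : τ ≤ t <;>
      simp [Function.uncurry, Set.indicator, hle, Set.mem_setOf_eq]
  have swap := MeasureTheory.integral_integral_swap hΦint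
  rw [intervalIntegral.integral_of_le hc, intervalIntegral.integral_of_le hc]
  calc ∫ t in Set.Ioc 0 c, F t * ∫ τ in (0:ℝ)..t, h τ
      = ∫ t in Set.Ioc 0 c, ∫ τ, F t * (Set.Iic t).indicator h τ ∂μ := by
        refine setIntegral_congr_fun measurableSet_Ioc (fun t ht => ?_)
        rw [MeasureTheory.integral_const_mul, hμ, MeasureTheory.integral_indicator measurableSet_Iic,
          Measure.restrict_restrict measurableSet_Iic,
          intervalIntegral.integral_of_le ht.1.le]
        congr 2
        rw [Set.Iic_inter_Ioc_of_le ht.2]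
    _ = ∫ τ, ∫ t, F t * (Set.Iic t).indicator h τ ∂μ ∂μ := swap
    _ = ∫ τ in Set.Ioc 0 c, (∫ s in τ..c, F s) * h τ := by
        refine setIntegral_congr_fun measurableSet_Ioc (fun τ hτ => ?_)
        have : ∀ t, F t * (Set.Iic t).indicator h τ
            = (Set.Ici τ).indicator (fun t => F t * h τ) t := by
          intro t
          by_cases hle : τ ≤ t <;> simp [Set.indicator, hle]
        rw [MeasureTheory.integral_congr_ae (Filter.Eventually.of_forall this), hμ,
          MeasureTheory.integral_indicator measurableSet_Ici,
          Measure.restrict_restrict measurableSet_Ici]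
        have hset : Set.Ici τ ∩ Set.Ioc 0 c = Set.Icc τ c := by
          ext x
          simp only [Set.mem_inter_iff, Set.mem_Ici, Set.mem_Ioc, Set.mem_Icc]
          exact ⟨fun ⟨h1, _, h3⟩ => ⟨h1, h3⟩, fun ⟨h1, h2⟩ => ⟨h1, hτ.1.trans_le h1, h2⟩⟩
        rw [hset, MeasureTheory.integral_Icc_eq_integral_Ioc,
          MeasureTheory.integral_mul_const, intervalIntegral.integral_of_le hτ.2]

lemma key_ineq (q v : ℝ) (hq : 0 ≤ q) :
    1/2*(max 0 (q-1))^2 + max 0 (q-1) - q*(max 0 (q-1)) + 1/2*(v - max 0 (q-1))^2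
      ≤ 1/2*v^2 + |v| - q*v := by
  rcases le_or_gt q 1 with h | h
  · rw [max_eq_left (by linarith)]
    have h1 := le_abs_self v
    have h2 := neg_abs_le v
    nlinarith [abs_nonneg v]
  · rw [max_eq_right (by linarith)]
    have h1 := le_abs_self v
    nlinarith

/-- For the general scalar ODE `y' = f y + g u` with continuous
positive `f, g`, `γ ≥ 1`, `α < 0`, with `F(t) = exp(∫₀^t f)`, `H(t) = ∫₀^t F`,
and `uhat(t) = max{0, -1 - γ g(t)H(t)/F(t) + λ g(t)/F(t)}` where `λ > 0` is
chosen so that `∫₀^T uhat g/F = -α`, the control `uhat` is the unique (up to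
a.e. equality) minimizer of `∫₀^T [½|u|² + |u| + γ|y|]` over all
`u ∈ L²(0,T)` whose state `y(t) = F(t)(α + ∫₀^t (g/F)u)` satisfies the
terminal condition `y(T) = 0`. -/
theorem stmt_8 (f g : ℝ → ℝ)
    (hf : ContinuousOn f (Set.Ici 0)) (hg : ContinuousOn g (Set.Ici 0))
    (hfpos : ∀ t : ℝ, 0 ≤ t → 0 < f t) (hgpos : ∀ t : ℝ, 0 ≤ t → 0 < g t)
    (T γ α lam : ℝ) (hT : 0 < T) (hγ : 1 ≤ γ) (hα : α < 0) (hlam : 0 < lam)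
    (F H uhat : ℝ → ℝ)
    (hF : ∀ t, F t = Real.exp (∫ s in (0:ℝ)..t, f s))
    (hH : ∀ t, H t = ∫ τ in (0:ℝ)..t, F τ)
    (huhat : ∀ t, uhat t
      = max 0 (-1 - γ * (g t * H t) / F t + lam * (g t / F t)))
    (hmom : ∫ τ in (0:ℝ)..T, uhat τ * (g τ / F τ) = -α)
    (J : (ℝ → ℝ) → ℝ)
    (hJ : ∀ u : ℝ → ℝ,
      J u = ∫ t in (0:ℝ)..T,
        (1/2 * |u t|^2 + |u t|
          + γ * |F t * (α + ∫ τ in (0:ℝ)..t, (g τ / F τ) * u τ)|)) :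
    F T * (α + ∫ τ in (0:ℝ)..T, (g τ / F τ) * uhat τ) = 0 ∧
    (∀ u : ℝ → ℝ, MemLp u 2 (volume.restrict (Set.Ioc (0:ℝ) T)) →
      F T * (α + ∫ τ in (0:ℝ)..T, (g τ / F τ) * u τ) = 0 →
      J uhat ≤ J u) ∧
    (∀ u : ℝ → ℝ, MemLp u 2 (volume.restrict (Set.Ioc (0:ℝ) T)) →
      F T * (α + ∫ τ in (0:ℝ)..T, (g τ / F τ) * u τ) = 0 →
      J u = J uhat → u =ᵐ[volume.restrict (Set.Ioc (0:ℝ) T)] uhat) := by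
  have hT' : (0:ℝ) ≤ T := hT.le
  set k : ℝ → ℝ := fun t => g t / F t with hk
  have hFpos : ∀ t, 0 < F t := fun t => by rw [hF]; exact Real.exp_pos _
  have hFne : ∀ t, F t ≠ 0 := fun t => (hFpos t).ne'
  -- continuity of F on [0,T]
  have hfint : IntegrableOn f (Icc 0 T) := ((hf.mono (Icc_subset_Ici_self)).integrableOn_compact
    isCompact_Icc)
  have hprim : ContinuousOn (fun t => ∫ s in (0:ℝ)..t, f s) (Icc 0 T) := by
    have := intervalIntegral.continuousOn_primitive_interval
      (a := (0:ℝ)) (b := T) (μ := volume) (f := f) (by rwa [uIcc_of_le hT'])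
    rwa [uIcc_of_le hT'] at this
  have hFcont : ContinuousOn F (Icc 0 T) :=
    (Real.continuous_exp.comp_continuousOn hprim).congr (fun t _ => hF t)
  have hFint : IntegrableOn F (Icc 0 T) := hFcont.integrableOn_compact isCompact_Icc
  have hHcont : ContinuousOn H (Icc 0 T) := by
    have := intervalIntegral.continuousOn_primitive_interval
      (a := (0:ℝ)) (b := T) (μ := volume) (f := F) (by rwa [uIcc_of_le hT'])
    rw [uIcc_of_le hT'] at this
    exact this.congr (fun t _ => hH t)
  -- interval integrability of continuous-on-[0,T] functions
  have contII : ∀ (φ : ℝ → ℝ), ContinuousOn φ (Icc 0 T) → ∀ a b : ℝ,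
      a ∈ Icc (0:ℝ) T → b ∈ Icc (0:ℝ) T → IntervalIntegrable φ volume a b :=
    fun φ hφ a b ha hb => (hφ.mono (uIcc_subset_Icc ha hb)).intervalIntegrable
  have hFii := contII F hFcont
  have hmemT : ∀ t : ℝ, 0 ≤ t → t ≤ T → t ∈ Icc (0:ℝ) T := fun t h1 h2 => ⟨h1, h2⟩
  have h0mem : (0:ℝ) ∈ Icc (0:ℝ) T := ⟨le_refl _, hT'⟩
  have hTmem : T ∈ Icc (0:ℝ) T := ⟨hT', le_refl _⟩
  -- H basic facts
  have hH0 : H 0 = 0 := by rw [hH, intervalIntegral.integral_same]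
  have hHadd : ∀ a b : ℝ, a ∈ Icc (0:ℝ) T → b ∈ Icc (0:ℝ) T →
      H b = H a + ∫ s in a..b, F s := by
    intro a b ha hb
    rw [hH, hH, ← intervalIntegral.integral_add_adjacent_intervals
      (hFii 0 a h0mem ha) (hFii a b ha hb)]
  have hHmono : ∀ a b : ℝ, a ∈ Icc (0:ℝ) T → b ∈ Icc (0:ℝ) T → a ≤ b → H a ≤ H b := by
    intro a b ha hb hab
    rw [hHadd a b ha hb]
    have : 0 ≤ ∫ s in a..b, F s :=
      intervalIntegral.integral_nonneg hab (fun u _ => (hFpos u).le)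
    linarith
  have hHnonneg : ∀ t, t ∈ Icc (0:ℝ) T → 0 ≤ H t := fun t ht => by
    have := hHmono 0 t h0mem ht ht.1; rwa [hH0] at this
  -- k
  have hkcont : ContinuousOn k (Icc 0 T) :=
    (hg.mono (Icc_subset_Ici_self)).div hFcont (fun t _ => hFne t)
  have hkpos : ∀ t : ℝ, 0 ≤ t → 0 < k t := fun t ht =>
    div_pos (hgpos t ht) (hFpos t)
  -- Q and uhat
  set Q : ℝ → ℝ := fun t => max 0 (lam - γ * H t) with hQdef
  have hQnonneg : ∀ t, 0 ≤ Q t := fun t => le_max_left _ _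
  have hmax0 : Continuous (fun x : ℝ => max 0 x) := continuous_const.max continuous_id
  have hQcont : ContinuousOn Q (Icc 0 T) :=
    hmax0.comp_continuousOn (continuousOn_const.sub (continuousOn_const.mul hHcont))
  have huhat' : ∀ t : ℝ, 0 ≤ t → uhat t = max 0 (Q t * k t - 1) := by
    intro t ht
    rw [huhat]
    have heq : -1 - γ * (g t * H t) / F t + lam * (g t / F t)
        = (lam - γ * H t) * k t - 1 := by
      rw [hk]; field_simp; ring
    rw [heq]
    show (0:ℝ) ⊔ ((lam - γ * H t) * k t - 1) = 0 ⊔ ((0 ⊔ (lam - γ * H t)) * k t - 1)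
    rcases le_or_gt 0 (lam - γ * H t) with h | h
    · rw [max_eq_right h]
    · have h1 : (lam - γ * H t) * k t - 1 ≤ 0 := by
        have := mul_nonpos_of_nonpos_of_nonneg h.le (hkpos t ht).le
        nlinarith
      have h2 : ((0:ℝ) ⊔ (lam - γ * H t)) * k t - 1 ≤ 0 := by
        rw [max_eq_left h.le, zero_mul]; norm_num
      rw [max_eq_left h1, max_eq_left h2]
  have huhat_nonneg : ∀ t, 0 ≤ uhat t := fun t => by rw [huhat]; exact le_max_left _ _
  have huhatcont : ContinuousOn uhat (Icc 0 T) := by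
    have : ContinuousOn (fun t => max 0 (Q t * k t - 1)) (Icc 0 T) :=
      hmax0.comp_continuousOn ((hQcont.mul hkcont).sub continuousOn_const)
    exact this.congr (fun t ht => huhat' t ht.1)
    -- moment condition in k-form
  have hmom' : ∫ τ in (0:ℝ)..T, k τ * uhat τ = -α := by
    rw [← hmom]
    exact intervalIntegral.integral_congr (fun τ _ => mul_comm _ _)
  have part1 : F T * (α + ∫ τ in (0:ℝ)..T, (g τ / F τ) * uhat τ) = 0 := by
    have h1 : ∫ τ in (0:ℝ)..T, (g τ / F τ) * uhat τ = -α := hmom'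
    rw [h1]; ring
  -- the switching time c
  set S : Set ℝ := {t ∈ Icc (0:ℝ) T | γ * H t ≤ lam} with hSdef
  have hSclosed : IsClosed S := by
    have hSeq : S = Icc (0:ℝ) T ∩ (fun t => γ * H t) ⁻¹' (Iic lam) := by
      ext t; simp [hSdef, Set.mem_sep_iff, Set.mem_preimage, Set.mem_Iic]
    rw [hSeq]
    exact (continuousOn_const.mul hHcont).preimage_isClosed_of_isClosed isClosed_Icc isClosed_Iic
  have hScomp : IsCompact S :=
    IsCompact.of_isClosed_subset isCompact_Icc hSclosed (sep_subset _ _)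
  have hS0 : (0:ℝ) ∈ S := ⟨h0mem, by rw [hH0]; simpa using hlam.le⟩
  set c : ℝ := sSup S with hcdef
  have hcS : c ∈ S := hScomp.sSup_mem ⟨0, hS0⟩
  have hc0 : 0 ≤ c := hcS.1.1
  have hcT : c ≤ T := hcS.1.2
  have hcmem : c ∈ Icc (0:ℝ) T := hcS.1
  have hub : ∀ t ∈ S, t ≤ c := fun t ht => le_csSup hScomp.bddAbove ht
  have hγ0 : (0:ℝ) ≤ γ := by linarith
  have hQc : ∀ t, t ∈ Icc (0:ℝ) c → γ * H t ≤ lam := by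
    intro t ht
    have h1 : t ∈ Icc (0:ℝ) T := ⟨ht.1, ht.2.trans hcT⟩
    exact le_trans (mul_le_mul_of_nonneg_left (hHmono t c h1 hcmem ht.2) hγ0) hcS.2
  have hafter : ∀ t, c < t → t ≤ T → lam < γ * H t := by
    intro t h1 h2
    by_contra hcon
    push_neg at hcon
    exact absurd (hub t ⟨⟨hc0.trans h1.le, h2⟩, hcon⟩) (not_le.mpr h1)
  have hcrit : c < T → γ * H c = lam := by
    intro hlt
    by_contra hne
    have hlt2 : γ * H c < lam := lt_of_le_of_ne hcS.2 hne
    have hcw : ContinuousWithinAt (fun t => γ * H t) (Icc 0 T) c :=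
      (continuousOn_const.mul hHcont) c hcmem
    have hev : ∀ᶠ t in nhdsWithin c (Icc (0:ℝ) T), γ * H t < lam :=
      hcw.eventually_lt_const hlt2
    rw [eventually_nhdsWithin_iff] at hev
    have hev2 : ∀ᶠ t in nhdsWithin c (Ioi c), t ∈ Icc (0:ℝ) T → γ * H t < lam :=
      hev.filter_mono nhdsWithin_le_nhds
    have hev3 : ∀ᶠ t in nhdsWithin c (Ioi c), t ∈ Ioc c T :=
      Filter.eventually_of_mem (Ioc_mem_nhdsGT_of_mem ⟨le_refl c, hlt⟩) (fun _ ht => ht)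
    obtain ⟨t, h1, h2⟩ := (hev2.and hev3).exists
    have hmem2 : t ∈ Icc (0:ℝ) T := ⟨hc0.trans h2.1.le, h2.2⟩
    exact absurd (hub t ⟨hmem2, (h1 hmem2).le⟩) (not_le.mpr h2.1)
  -- Q and uhat vanish after c
  have hQzero : c < T → ∀ τ ∈ Icc c T, Q τ = 0 := by
    intro hlt τ hτ
    rcases eq_or_lt_of_le hτ.1 with heq | hgt
    · show (0:ℝ) ⊔ (lam - γ * H τ) = 0
      rw [← heq, hcrit hlt]; simp
    · exact max_eq_left (by linarith [hafter τ hgt hτ.2])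
  have huhat0 : c < T → ∀ τ ∈ Icc c T, uhat τ = 0 := by
    intro hlt τ hτ
    rw [huhat' τ (hc0.trans hτ.1), hQzero hlt τ hτ, zero_mul]
    exact max_eq_left (by norm_num)
  -- yhat facts
  have hkuhat_cont : ContinuousOn (fun τ => k τ * uhat τ) (Icc 0 T) := hkcont.mul huhatcont
  have hkuhat_ii := contII _ hkuhat_cont
  have hint_t : ∀ t ∈ Icc (0:ℝ) T, (∫ τ in (0:ℝ)..T, k τ * uhat τ)
      = (∫ τ in (0:ℝ)..t, k τ * uhat τ) + ∫ τ in t..T, k τ * uhat τ := fun t ht =>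
    (intervalIntegral.integral_add_adjacent_intervals (hkuhat_ii 0 t h0mem ht)
      (hkuhat_ii t T ht hTmem)).symm
  have hyhat_le : ∀ t ∈ Icc (0:ℝ) T, (∫ τ in (0:ℝ)..t, k τ * uhat τ) ≤ -α := by
    intro t ht
    have h2 : 0 ≤ ∫ τ in t..T, k τ * uhat τ :=
      intervalIntegral.integral_nonneg ht.2
        (fun τ hτ => mul_nonneg (hkpos τ (ht.1.trans hτ.1)).le (huhat_nonneg τ))
    have h3 := hint_t t ht
    rw [hmom'] at h3
    linarith
  have hYhat_nonpos : ∀ t ∈ Icc (0:ℝ) T,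
      F t * (α + ∫ τ in (0:ℝ)..t, k τ * uhat τ) ≤ 0 := fun t ht =>
    mul_nonpos_of_nonneg_of_nonpos (hFpos t).le (by linarith [hyhat_le t ht])
  have hYhat_zero : c < T → ∀ t ∈ Icc c T,
      α + (∫ τ in (0:ℝ)..t, k τ * uhat τ) = 0 := by
    intro hlt t ht
    have hmem2 : t ∈ Icc (0:ℝ) T := ⟨hc0.trans ht.1, ht.2⟩
    have hz : ∫ τ in t..T, k τ * uhat τ = 0 := by
      have heqon : EqOn (fun τ => k τ * uhat τ) (fun _ => (0:ℝ)) (uIcc t T) := by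
        intro τ hτ
        rw [uIcc_of_le ht.2] at hτ
        show k τ * uhat τ = 0
        rw [huhat0 hlt τ ⟨ht.1.trans hτ.1, hτ.2⟩, mul_zero]
      rw [intervalIntegral.integral_congr heqon]
      simp
    have h3 := hint_t t hmem2
    rw [hmom', hz] at h3
    linarith
    -- general-purpose integrability helpers
  have meas_ii : ∀ (v : ℝ → ℝ), IntegrableOn v (Ioc 0 T) → ∀ a b : ℝ,
      a ∈ Icc (0:ℝ) T → b ∈ Icc (0:ℝ) T → IntervalIntegrable v volume a b := by
    intro v hv a b ha hb
    rw [intervalIntegrable_iff]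
    exact hv.mono_set (Set.Ioc_subset_Ioc (le_inf ha.1 hb.1) (sup_le ha.2 hb.2))
  have prodInt : ∀ (φ : ℝ → ℝ), ContinuousOn φ (Icc 0 T) → ∀ (v : ℝ → ℝ),
      IntegrableOn v (Ioc 0 T) → IntegrableOn (fun τ => φ τ * v τ) (Ioc 0 T) := by
    intro φ hφ v hv
    obtain ⟨C, hC⟩ := isCompact_Icc.exists_bound_of_continuousOn hφ
    refine hv.bdd_mul (c := C) ((hφ.mono Ioc_subset_Icc_self).aestronglyMeasurable measurableSet_Ioc) ?_
    filter_upwards [ae_restrict_mem measurableSet_Ioc] with x hx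
    exact hC x (Ioc_subset_Icc_self hx)
  have huhat_mem2 : MemLp uhat 2 (volume.restrict (Set.Ioc (0:ℝ) T)) := by
    obtain ⟨C, hC⟩ := isCompact_Icc.exists_bound_of_continuousOn huhatcont
    refine MemLp.of_bound
      ((huhatcont.mono Ioc_subset_Icc_self).aestronglyMeasurable measurableSet_Ioc) C ?_
    filter_upwards [ae_restrict_mem measurableSet_Ioc] with x hx
    exact hC x (Ioc_subset_Icc_self hx)
  have huIcc : (Set.uIcc (0:ℝ) T) = Icc 0 T := uIcc_of_le hT'
  -- THE KEY ESTIMATE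
  have key : ∀ u : ℝ → ℝ,
      MemLp u 2 (volume.restrict (Set.Ioc (0:ℝ) T)) →
      (∫ τ in (0:ℝ)..T, k τ * u τ) = -α →
      J uhat + (∫ t in (0:ℝ)..T, 1/2*(u t - uhat t)^2) ≤ J u := by
    intro u hu2 huterm
    have huL1 : IntegrableOn u (Ioc 0 T) := hu2.integrable one_le_two
    have hsub2 : MemLp (fun t => u t - uhat t) 2 (volume.restrict (Set.Ioc (0:ℝ) T)) :=
      hu2.sub huhat_mem2
    have hsub_int : IntegrableOn (fun τ => u τ - uhat τ) (Ioc 0 T) := hsub2.integrable one_le_two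
    have hh_int : IntegrableOn (fun τ => k τ * (u τ - uhat τ)) (Ioc 0 T) :=
      prodInt k hkcont _ hsub_int
    have hku_int : IntegrableOn (fun τ => k τ * u τ) (Ioc 0 T) := prodInt k hkcont u huL1
    have hkuii := meas_ii _ hku_int
    have hhii := meas_ii _ hh_int
    have hWint : IntegrableOn (fun t => 1/2*(u t - uhat t)^2) (Ioc 0 T) :=
      (hsub2.integrable_sq).const_mul (1/2)
    have hWii := meas_ii _ hWint
    have hG0 : (∫ τ in (0:ℝ)..T, k τ * (u τ - uhat τ)) = 0 := by
      have e : ∫ τ in (0:ℝ)..T, k τ * (u τ - uhat τ)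
          = (∫ τ in (0:ℝ)..T, k τ * u τ) - ∫ τ in (0:ℝ)..T, k τ * uhat τ := by
        rw [← intervalIntegral.integral_sub (hkuii 0 T h0mem hTmem) (hkuhat_ii 0 T h0mem hTmem)]
        exact intervalIntegral.integral_congr (fun τ _ => by ring)
      rw [e, huterm, hmom']; ring
    -- continuity of the primitives and states
    have hprim_u : ContinuousOn (fun t => ∫ τ in (0:ℝ)..t, k τ * u τ) (Icc 0 T) := by
      have := intervalIntegral.continuousOn_primitive_interval (a := (0:ℝ)) (b := T)
        (μ := volume) (f := fun τ => k τ * u τ)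
        (by rw [huIcc]; exact (integrableOn_Icc_iff_integrableOn_Ioc).mpr hku_int)
      rwa [huIcc] at this
    have hprim_uhat : ContinuousOn (fun t => ∫ τ in (0:ℝ)..t, k τ * uhat τ) (Icc 0 T) := by
      have := intervalIntegral.continuousOn_primitive_interval (a := (0:ℝ)) (b := T)
        (μ := volume) (f := fun τ => k τ * uhat τ)
        (by rw [huIcc]; exact hkuhat_cont.integrableOn_compact isCompact_Icc)
      rwa [huIcc] at this
    have hYu_cont : ContinuousOn (fun t => F t * (α + ∫ τ in (0:ℝ)..t, k τ * u τ)) (Icc 0 T) :=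
      hFcont.mul (continuousOn_const.add hprim_u)
    have hYh_cont : ContinuousOn (fun t => F t * (α + ∫ τ in (0:ℝ)..t, k τ * uhat τ)) (Icc 0 T) :=
      hFcont.mul (continuousOn_const.add hprim_uhat)
    -- STEP 2 : pointwise convexity
    have hpt2 : ∀ t ∈ Icc (0:ℝ) T,
        (1/2*|uhat t|^2 + |uhat t|) + Q t * k t * (u t - uhat t) + 1/2*(u t - uhat t)^2
          ≤ 1/2*|u t|^2 + |u t| := by
      intro t ht
      have hq : 0 ≤ Q t * k t := mul_nonneg (hQnonneg t) (hkpos t ht.1).le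
      have hk2 := key_ineq (Q t * k t) (u t) hq
      rw [huhat' t ht.1, abs_of_nonneg (le_max_left _ _), sq_abs]
      nlinarith [hk2]
    have II1 : IntervalIntegrable (fun t => 1/2*|uhat t|^2 + |uhat t|) volume 0 T :=
      contII _ ((continuousOn_const.mul ((huhatcont.abs).pow 2)).add huhatcont.abs) 0 T h0mem hTmem
    have II2 : IntervalIntegrable (fun t => Q t * k t * (u t - uhat t)) volume 0 T :=
      meas_ii _ (prodInt _ (hQcont.mul hkcont) _ hsub_int) 0 T h0mem hTmem
    have II3 := hWii 0 T h0mem hTmem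
    have II4 : IntervalIntegrable (fun t => 1/2*|u t|^2 + |u t|) volume 0 T := by
      have ha : IntegrableOn (fun t => 1/2*|u t|^2) (Ioc 0 T) := by
        have := (hu2.integrable_sq).const_mul (1/2)
        exact this.congr (Filter.Eventually.of_forall (fun x => by simp [sq_abs]))
      exact meas_ii _ (ha.add huL1.abs) 0 T h0mem hTmem
    have step2 : (∫ t in (0:ℝ)..T, (1/2*|uhat t|^2 + |uhat t|))
        + (∫ t in (0:ℝ)..T, Q t * k t * (u t - uhat t))
        + (∫ t in (0:ℝ)..T, 1/2*(u t - uhat t)^2)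
        ≤ ∫ t in (0:ℝ)..T, (1/2*|u t|^2 + |u t|) := by
      have hmono := intervalIntegral.integral_mono_on hT' ((II1.add II2).add II3) II4 hpt2
      rwa [intervalIntegral.integral_add (II1.add II2) II3,
        intervalIntegral.integral_add II1 II2] at hmono
    -- STEP 1 : the adjoint computation
    have hsplitQ : (∫ t in (0:ℝ)..T, Q t * k t * (u t - uhat t))
        = ∫ τ in (0:ℝ)..c, (lam - γ * H τ) * (k τ * (u τ - uhat τ)) := by
      have hQh_int : IntegrableOn (fun t => Q t * (k t * (u t - uhat t))) (Ioc 0 T) :=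
        prodInt Q hQcont _ hh_int
      have hQhii := meas_ii _ hQh_int
      have e1 : ∫ t in (0:ℝ)..T, Q t * k t * (u t - uhat t)
          = ∫ t in (0:ℝ)..T, Q t * (k t * (u t - uhat t)) :=
        intervalIntegral.integral_congr (fun τ _ => by ring)
      have e2 := intervalIntegral.integral_add_adjacent_intervals
        (hQhii 0 c h0mem hcmem) (hQhii c T hcmem hTmem)
      have e3 : ∫ t in c..T, Q t * (k t * (u t - uhat t)) = 0 := by
        rcases eq_or_lt_of_le hcT with heq | hlt
        · rw [heq, intervalIntegral.integral_same]
        · have heqon : EqOn (fun t => Q t * (k t * (u t - uhat t))) (fun _ => (0:ℝ)) (Set.uIcc c T) := by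
            intro τ hτ
            rw [uIcc_of_le hcT] at hτ
            show Q τ * _ = 0
            rw [hQzero hlt τ hτ, zero_mul]
          rw [intervalIntegral.integral_congr heqon]
          simp
      have e4 : ∫ t in (0:ℝ)..c, Q t * (k t * (u t - uhat t))
          = ∫ τ in (0:ℝ)..c, (lam - γ * H τ) * (k τ * (u τ - uhat τ)) := by
        apply intervalIntegral.integral_congr
        intro τ hτ
        rw [uIcc_of_le hc0] at hτ
        show Q τ * _ = _
        rw [show Q τ = lam - γ * H τ from max_eq_right (by linarith [hQc τ hτ])]
      linarith [e1, e2, e3, e4]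
    have hHc_eq : ∀ τ ∈ Icc (0:ℝ) c, (∫ s in τ..c, F s) = H c - H τ := by
      intro τ hτ
      have hτT : τ ∈ Icc (0:ℝ) T := ⟨hτ.1, hτ.2.trans hcT⟩
      have := hHadd τ c hτT hcmem
      linarith
    have hswap := swap_lemma F (fun τ => k τ * (u τ - uhat τ)) c hc0
      (hFcont.mono (Icc_subset_Icc (le_refl 0) hcT))
      (hh_int.mono_set (Ioc_subset_Ioc (le_refl 0) hcT))
    have hswap2 : (∫ t in (0:ℝ)..c, F t * ∫ τ in (0:ℝ)..t, k τ * (u τ - uhat τ))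
        = ∫ τ in (0:ℝ)..c, (H c - H τ) * (k τ * (u τ - uhat τ)) := by
      rw [hswap]
      apply intervalIntegral.integral_congr
      intro τ hτ
      rw [uIcc_of_le hc0] at hτ
      show (∫ s in τ..c, F s) * (k τ * (u τ - uhat τ)) = (H c - H τ) * (k τ * (u τ - uhat τ))
      rw [hHc_eq τ hτ]
    have hlamHc : (lam - γ * H c) * (∫ τ in (0:ℝ)..c, k τ * (u τ - uhat τ)) = 0 := by
      rcases eq_or_lt_of_le hcT with heq | hlt
      · rw [heq, hG0, mul_zero]
      · rw [hcrit hlt, sub_self, zero_mul]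
    have hlin : ∫ τ in (0:ℝ)..c, (lam - γ * H τ) * (k τ * (u τ - uhat τ))
        = γ * ∫ τ in (0:ℝ)..c, (H c - H τ) * (k τ * (u τ - uhat τ)) := by
      have IIA : IntervalIntegrable
          (fun τ => γ * ((H c - H τ) * (k τ * (u τ - uhat τ)))) volume 0 c := by
        have hbase : IntegrableOn
            (fun τ => (γ * (H c - H τ)) * (k τ * (u τ - uhat τ))) (Ioc 0 T) :=
          prodInt _ (continuousOn_const.mul (continuousOn_const.sub hHcont)) _ hh_int
        exact meas_ii _ (hbase.congr (Filter.Eventually.of_forall (fun x => by ring)))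
          0 c h0mem hcmem
      have IIB : IntervalIntegrable
          (fun τ => (lam - γ * H c) * (k τ * (u τ - uhat τ))) volume 0 c :=
        (hhii 0 c h0mem hcmem).const_mul _
      have eA : EqOn (fun τ => (lam - γ * H τ) * (k τ * (u τ - uhat τ)))
          (fun τ => γ * ((H c - H τ) * (k τ * (u τ - uhat τ)))
            + (lam - γ * H c) * (k τ * (u τ - uhat τ))) (Set.uIcc (0:ℝ) c) :=
        fun τ _ => by show _ = _; ring
      rw [intervalIntegral.integral_congr eA, intervalIntegral.integral_add IIA IIB,
        intervalIntegral.integral_const_mul, intervalIntegral.integral_const_mul, hlamHc,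
        add_zero]
    -- interval integrability of the |Y| integrands
    have IIYu := contII _ hYu_cont
    have IIYh := contII _ hYh_cont
    have IIYuabs : ∀ a b : ℝ, a ∈ Icc (0:ℝ) T → b ∈ Icc (0:ℝ) T → IntervalIntegrable
        (fun t => γ * |F t * (α + ∫ τ in (0:ℝ)..t, k τ * u τ)|) volume a b :=
      contII _ (continuousOn_const.mul hYu_cont.abs)
    have IIYhabs : ∀ a b : ℝ, a ∈ Icc (0:ℝ) T → b ∈ Icc (0:ℝ) T → IntervalIntegrable
        (fun t => γ * |F t * (α + ∫ τ in (0:ℝ)..t, k τ * uhat τ)|) volume a b :=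
      contII _ (continuousOn_const.mul hYh_cont.abs)
    -- split the |Y| integrals at c
    have hsplitYu : (∫ t in (0:ℝ)..T, γ * |F t * (α + ∫ τ in (0:ℝ)..t, k τ * u τ)|)
        = (∫ t in (0:ℝ)..c, γ * |F t * (α + ∫ τ in (0:ℝ)..t, k τ * u τ)|)
          + ∫ t in c..T, γ * |F t * (α + ∫ τ in (0:ℝ)..t, k τ * u τ)| :=
      (intervalIntegral.integral_add_adjacent_intervals
        (IIYuabs 0 c h0mem hcmem) (IIYuabs c T hcmem hTmem)).symm
    have hsplitYh : (∫ t in (0:ℝ)..T, γ * |F t * (α + ∫ τ in (0:ℝ)..t, k τ * uhat τ)|)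
        = (∫ t in (0:ℝ)..c, γ * |F t * (α + ∫ τ in (0:ℝ)..t, k τ * uhat τ)|)
          + ∫ t in c..T, γ * |F t * (α + ∫ τ in (0:ℝ)..t, k τ * uhat τ)| :=
      (intervalIntegral.integral_add_adjacent_intervals
        (IIYhabs 0 c h0mem hcmem) (IIYhabs c T hcmem hTmem)).symm
    have hYucT : 0 ≤ ∫ t in c..T, γ * |F t * (α + ∫ τ in (0:ℝ)..t, k τ * u τ)| :=
      intervalIntegral.integral_nonneg hcT (fun x _ => mul_nonneg hγ0 (abs_nonneg _))
    have hYhcT : (∫ t in c..T, γ * |F t * (α + ∫ τ in (0:ℝ)..t, k τ * uhat τ)|) = 0 := by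
      rcases eq_or_lt_of_le hcT with heq | hlt
      · rw [heq, intervalIntegral.integral_same]
      · have heqon : EqOn (fun t => γ * |F t * (α + ∫ τ in (0:ℝ)..t, k τ * uhat τ)|)
            (fun _ => (0:ℝ)) (Set.uIcc c T) := by
          intro τ hτ
          rw [uIcc_of_le hcT] at hτ
          show γ * |F τ * (α + ∫ x in (0:ℝ)..τ, k x * uhat x)| = 0
          rw [hYhat_zero hlt τ hτ, mul_zero, abs_zero, mul_zero]
        rw [intervalIntegral.integral_congr heqon]
        simp
    have hYhc_abs : (∫ t in (0:ℝ)..c, γ * |F t * (α + ∫ τ in (0:ℝ)..t, k τ * uhat τ)|)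
        = -(γ * ∫ t in (0:ℝ)..c, F t * (α + ∫ τ in (0:ℝ)..t, k τ * uhat τ)) := by
      have heqon : EqOn (fun t => γ * |F t * (α + ∫ τ in (0:ℝ)..t, k τ * uhat τ)|)
          (fun t => γ * -(F t * (α + ∫ τ in (0:ℝ)..t, k τ * uhat τ))) (Set.uIcc (0:ℝ) c) := by
        intro t ht
        rw [uIcc_of_le hc0] at ht
        show γ * |F t * (α + ∫ τ in (0:ℝ)..t, k τ * uhat τ)| = _
        rw [abs_of_nonpos (hYhat_nonpos t ⟨ht.1, ht.2.trans hcT⟩)]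
      rw [intervalIntegral.integral_congr heqon, intervalIntegral.integral_const_mul]
      have : (∫ t in (0:ℝ)..c, -(F t * (α + ∫ τ in (0:ℝ)..t, k τ * uhat τ)))
          = -∫ t in (0:ℝ)..c, F t * (α + ∫ τ in (0:ℝ)..t, k τ * uhat τ) :=
        intervalIntegral.integral_neg
      rw [this]; ring
    have hYuc_lower : -(γ * ∫ t in (0:ℝ)..c, F t * (α + ∫ τ in (0:ℝ)..t, k τ * u τ))
        ≤ ∫ t in (0:ℝ)..c, γ * |F t * (α + ∫ τ in (0:ℝ)..t, k τ * u τ)| := by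
      have hpt : ∀ t ∈ Icc (0:ℝ) c,
          γ * -(F t * (α + ∫ τ in (0:ℝ)..t, k τ * u τ))
            ≤ γ * |F t * (α + ∫ τ in (0:ℝ)..t, k τ * u τ)| := fun t _ =>
        mul_le_mul_of_nonneg_left (neg_le_abs _) hγ0
      have hmono : (∫ t in (0:ℝ)..c, γ * -(F t * (α + ∫ τ in (0:ℝ)..t, k τ * u τ)))
          ≤ ∫ t in (0:ℝ)..c, γ * |F t * (α + ∫ τ in (0:ℝ)..t, k τ * u τ)| :=
        intervalIntegral.integral_mono_on hc0
          (((IIYu 0 c h0mem hcmem).neg).const_mul γ) (IIYuabs 0 c h0mem hcmem) hpt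
      have e : (∫ t in (0:ℝ)..c, γ * -(F t * (α + ∫ τ in (0:ℝ)..t, k τ * u τ)))
          = -(γ * ∫ t in (0:ℝ)..c, F t * (α + ∫ τ in (0:ℝ)..t, k τ * u τ)) := by
        rw [intervalIntegral.integral_const_mul]
        have : (∫ t in (0:ℝ)..c, -(F t * (α + ∫ τ in (0:ℝ)..t, k τ * u τ)))
            = -∫ t in (0:ℝ)..c, F t * (α + ∫ τ in (0:ℝ)..t, k τ * u τ) :=
          intervalIntegral.integral_neg
        rw [this]; ring
      rw [e] at hmono
      exact hmono
    have hYsub_int : (∫ t in (0:ℝ)..c, F t * (α + ∫ τ in (0:ℝ)..t, k τ * u τ))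
        - (∫ t in (0:ℝ)..c, F t * (α + ∫ τ in (0:ℝ)..t, k τ * uhat τ))
        = ∫ t in (0:ℝ)..c, F t * ∫ τ in (0:ℝ)..t, k τ * (u τ - uhat τ) := by
      rw [← intervalIntegral.integral_sub (IIYu 0 c h0mem hcmem) (IIYh 0 c h0mem hcmem)]
      apply intervalIntegral.integral_congr
      intro t ht
      rw [uIcc_of_le hc0] at ht
      have htT : t ∈ Icc (0:ℝ) T := ⟨ht.1, ht.2.trans hcT⟩
      show F t * (α + ∫ τ in (0:ℝ)..t, k τ * u τ)
        - F t * (α + ∫ τ in (0:ℝ)..t, k τ * uhat τ)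
        = F t * ∫ τ in (0:ℝ)..t, k τ * (u τ - uhat τ)
      have e : ∫ τ in (0:ℝ)..t, k τ * (u τ - uhat τ)
          = (∫ τ in (0:ℝ)..t, k τ * u τ) - ∫ τ in (0:ℝ)..t, k τ * uhat τ := by
        rw [← intervalIntegral.integral_sub (hkuii 0 t h0mem htT) (hkuhat_ii 0 t h0mem htT)]
        exact intervalIntegral.integral_congr (fun τ _ => by ring)
      rw [e]; ring
    -- step 1 assembled
    have h1 : (∫ t in (0:ℝ)..T, Q t * k t * (u t - uhat t))
        = γ * ((∫ t in (0:ℝ)..c, F t * (α + ∫ τ in (0:ℝ)..t, k τ * u τ))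
            - ∫ t in (0:ℝ)..c, F t * (α + ∫ τ in (0:ℝ)..t, k τ * uhat τ)) := by
      rw [hsplitQ, hlin, ← hswap2, ← hYsub_int]
    have hexp : γ * ((∫ t in (0:ℝ)..c, F t * (α + ∫ τ in (0:ℝ)..t, k τ * u τ))
            - ∫ t in (0:ℝ)..c, F t * (α + ∫ τ in (0:ℝ)..t, k τ * uhat τ))
        = γ * (∫ t in (0:ℝ)..c, F t * (α + ∫ τ in (0:ℝ)..t, k τ * u τ))
            - γ * ∫ t in (0:ℝ)..c, F t * (α + ∫ τ in (0:ℝ)..t, k τ * uhat τ) := by ring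
    have step1 : (∫ t in (0:ℝ)..T, γ * |F t * (α + ∫ τ in (0:ℝ)..t, k τ * uhat τ)|)
        - (∫ t in (0:ℝ)..T, Q t * k t * (u t - uhat t))
        ≤ ∫ t in (0:ℝ)..T, γ * |F t * (α + ∫ τ in (0:ℝ)..t, k τ * u τ)| := by
      rw [hsplitYu, hsplitYh, h1, hYhcT, hYhc_abs]
      linarith [hexp, hYuc_lower, hYucT]
    -- split J
    have IIabu : IntervalIntegrable (fun t => 1/2 * |u t|^2 + |u t|) volume 0 T := II4
    have IIabh : IntervalIntegrable (fun t => 1/2 * |uhat t|^2 + |uhat t|) volume 0 T := II1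
    have hJu : J u = (∫ t in (0:ℝ)..T, (1/2 * |u t|^2 + |u t|))
        + ∫ t in (0:ℝ)..T, γ * |F t * (α + ∫ τ in (0:ℝ)..t, k τ * u τ)| := by
      rw [hJ u]
      exact intervalIntegral.integral_add IIabu (IIYuabs 0 T h0mem hTmem)
    have hJh : J uhat = (∫ t in (0:ℝ)..T, (1/2 * |uhat t|^2 + |uhat t|))
        + ∫ t in (0:ℝ)..T, γ * |F t * (α + ∫ τ in (0:ℝ)..t, k τ * uhat τ)| := by
      rw [hJ uhat]
      exact intervalIntegral.integral_add IIabh (IIYhabs 0 T h0mem hTmem)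
    rw [hJu, hJh]
    linarith [step1, step2]
  -- wrap-up
  have hterm_conv : ∀ u : ℝ → ℝ,
      F T * (α + ∫ τ in (0:ℝ)..T, (g τ / F τ) * u τ) = 0 →
      (∫ τ in (0:ℝ)..T, k τ * u τ) = -α := by
    intro u hterm
    rcases mul_eq_zero.mp hterm with hbad | hok
    · exact absurd hbad (hFne T)
    · have : ∫ τ in (0:ℝ)..T, (g τ / F τ) * u τ = -α := by linarith
      exact this
  have hW_nonneg : ∀ u : ℝ → ℝ, 0 ≤ ∫ t in (0:ℝ)..T, 1/2*(u t - uhat t)^2 := fun u =>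
    intervalIntegral.integral_nonneg hT' (fun x _ => by positivity)
  refine ⟨part1, ?_, ?_⟩
  · intro u hu hterm
    have hkey := key u hu (hterm_conv u hterm)
    linarith [hW_nonneg u]
  · intro u hu hterm hJeq
    have hkey := key u hu (hterm_conv u hterm)
    have hW0 : (∫ t in (0:ℝ)..T, 1/2*(u t - uhat t)^2) ≤ 0 := by
      rw [hJeq] at hkey; linarith
    have hWint : Integrable (fun t => 1/2*(u t - uhat t)^2)
        (volume.restrict (Set.Ioc (0:ℝ) T)) :=
      ((hu.sub huhat_mem2).integrable_sq).const_mul (1/2)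
    have hset : ∫ t in Set.Ioc (0:ℝ) T, 1/2*(u t - uhat t)^2 = 0 := by
      have h1 := hW0
      rw [intervalIntegral.integral_of_le hT'] at h1
      have h2 : 0 ≤ ∫ t in Set.Ioc (0:ℝ) T, 1/2*(u t - uhat t)^2 :=
        setIntegral_nonneg measurableSet_Ioc (fun x _ => by positivity)
      linarith
    have hae0 := (MeasureTheory.integral_eq_zero_iff_of_nonneg_ae
      (Filter.Eventually.of_forall (fun x => by positivity)) hWint).mp hset
    filter_upwards [hae0] with x hx
    have hx' : 1/2*(u x - uhat x)^2 = 0 := hx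
    have h2 : (u x - uhat x)^2 = 0 := by linarith
    have h3 : u x - uhat x = 0 := pow_eq_zero_iff two_ne_zero |>.mp h2
    linarith
end

section
/- Let f, g : [0,∞) → ℝ be continuous with f > 0 and g > 0, let T > 0, γ > 0 and α < 0, and set F(t) = exp(∫₀^t f(s) ds), H(t) = ∫₀^t F(τ) dτ. Let u ∈ L²(0,T) satisfy u(t) ≥ 0 almost everywhere and ∫₀^T u(τ) g(τ)/F(τ) dτ = -α, and let y(t) = F(t)[α + ∫₀^t (g(τ)/F(τ)) u(τ) dτ]. Then the following integration-by-parts identity holds: ∫₀^T [½ u(t)² + u(t) - γ y(t)] dt = ∫₀^T [½ u(t)² + u(t)·(1 + γ H(t) g(t)/F(t))] dt. -/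
open MeasureTheory intervalIntegral

lemma fubini_triangle {T : ℝ} (h F : ℝ → ℝ)
    (hh : IntegrableOn h (Set.Ioc 0 T)) (hF : IntegrableOn F (Set.Ioc 0 T)) :
    ∫ t in Set.Ioc (0:ℝ) T, (∫ τ in Set.Ioc (0:ℝ) t, h τ) * F t
      = ∫ τ in Set.Ioc (0:ℝ) T, h τ * ∫ t in Set.Icc τ T, F t := by
  set μ := volume.restrict (Set.Ioc (0:ℝ) T) with hμ
  have hS : MeasurableSet {p : ℝ × ℝ | p.2 ≤ p.1} :=
    measurableSet_le measurable_snd measurable_fst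
  have hint : Integrable
      (Function.uncurry fun t τ =>
        Set.indicator {q : ℝ × ℝ | q.2 ≤ q.1} (fun q => F q.1 * h q.2) (t, τ)) (μ.prod μ) := by
    have := (hF.mul_prod hh).indicator hS
    exact this
  have swap := MeasureTheory.integral_integral_swap hint
  have hL : (∫ t, ∫ τ, Set.indicator {q : ℝ × ℝ | q.2 ≤ q.1} (fun q => F q.1 * h q.2) (t, τ) ∂μ ∂μ)
      = ∫ t in Set.Ioc (0:ℝ) T, (∫ τ in Set.Ioc (0:ℝ) t, h τ) * F t := by
    rw [hμ]
    apply setIntegral_congr_fun measurableSet_Ioc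
    intro t ht
    beta_reduce
    have he : (fun τ => Set.indicator {q : ℝ × ℝ | q.2 ≤ q.1} (fun q => F q.1 * h q.2) (t, τ))
        = Set.indicator (Set.Iic t) (fun τ => F t * h τ) := by
      ext τ
      by_cases hτ : τ ≤ t <;> simp [Set.indicator, hτ]
    rw [he, setIntegral_indicator measurableSet_Iic]
    have hs : Set.Ioc (0:ℝ) T ∩ Set.Iic t = Set.Ioc 0 t := by
      ext x
      simp only [Set.mem_inter_iff, Set.mem_Ioc, Set.mem_Iic]
      exact ⟨fun ⟨⟨a, _⟩, c⟩ => ⟨a, c⟩, fun ⟨a, c⟩ => ⟨⟨a, c.trans ht.2⟩, c⟩⟩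
    rw [hs, MeasureTheory.integral_const_mul, mul_comm]
  have hR : (∫ τ, ∫ t, Set.indicator {q : ℝ × ℝ | q.2 ≤ q.1} (fun q => F q.1 * h q.2) (t, τ) ∂μ ∂μ)
      = ∫ τ in Set.Ioc (0:ℝ) T, h τ * ∫ t in Set.Icc τ T, F t := by
    rw [hμ]
    apply setIntegral_congr_fun measurableSet_Ioc
    intro τ hτ
    beta_reduce
    have he : (fun t => Set.indicator {q : ℝ × ℝ | q.2 ≤ q.1} (fun q => F q.1 * h q.2) (t, τ))
        = Set.indicator (Set.Ici τ) (fun t => F t * h τ) := by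
      ext t
      by_cases ht : τ ≤ t <;> simp [Set.indicator, ht]
    rw [he, setIntegral_indicator measurableSet_Ici]
    have hs : Set.Ioc (0:ℝ) T ∩ Set.Ici τ = Set.Icc τ T := by
      ext x
      simp only [Set.mem_inter_iff, Set.mem_Ioc, Set.mem_Icc, Set.mem_Ici]
      exact ⟨fun ⟨⟨_, b⟩, c⟩ => ⟨c, b⟩, fun ⟨a, b⟩ => ⟨⟨hτ.1.trans_le a, b⟩, a⟩⟩
    rw [hs, MeasureTheory.integral_mul_const, mul_comm]
  rw [← hL, ← hR]
  exact swap


/-- For continuous positive `f, g`, `γ > 0`, `α < 0`, with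
`F(t) = exp(∫₀^t f)`, `H(t) = ∫₀^t F`, and a control `u ∈ L²(0,T)` with
`u ≥ 0` a.e. and `∫₀^T u g/F = -α`, the state
`y(t) = F(t)(α + ∫₀^t (g/F)u)` satisfies the integration-by-parts identity
`∫₀^T [½u² + u - γy] = ∫₀^T [½u² + u(1 + γ H g/F)]`. -/
theorem stmt_9 (f g : ℝ → ℝ)
    (hf : ContinuousOn f (Set.Ici 0)) (hg : ContinuousOn g (Set.Ici 0))
    (hfpos : ∀ t : ℝ, 0 ≤ t → 0 < f t) (hgpos : ∀ t : ℝ, 0 ≤ t → 0 < g t)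
    (T γ α : ℝ) (hT : 0 < T) (hγ : 0 < γ) (hα : α < 0)
    (F H : ℝ → ℝ)
    (hF : ∀ t, F t = Real.exp (∫ s in (0:ℝ)..t, f s))
    (hH : ∀ t, H t = ∫ τ in (0:ℝ)..t, F τ)
    (u : ℝ → ℝ)
    (hu : MemLp u 2 (volume.restrict (Set.Ioc (0:ℝ) T)))
    (hupos : ∀ᵐ t ∂(volume.restrict (Set.Ioc (0:ℝ) T)), 0 ≤ u t)
    (hmom : ∫ τ in (0:ℝ)..T, u τ * (g τ / F τ) = -α)
    (y : ℝ → ℝ)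
    (hy : ∀ t, y t = F t * (α + ∫ τ in (0:ℝ)..t, (g τ / F τ) * u τ)) :
    ∫ t in (0:ℝ)..T, (1/2 * (u t)^2 + u t - γ * y t)
      = ∫ t in (0:ℝ)..T,
          (1/2 * (u t)^2 + u t * (1 + γ * (H t * g t / F t))) := by
  have hT' : (0:ℝ) ≤ T := hT.le
  have huIcc : Set.uIcc (0:ℝ) T = Set.Icc 0 T := Set.uIcc_of_le hT'
  have hFpos : ∀ t, 0 < F t := fun t => (hF t).symm ▸ Real.exp_pos _
  have hfc : ContinuousOn f (Set.Icc 0 T) := hf.mono Set.Icc_subset_Ici_self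
  have hgc : ContinuousOn g (Set.Icc 0 T) := hg.mono Set.Icc_subset_Ici_self
  have hFc : ContinuousOn F (Set.Icc 0 T) := by
    have h1 : ContinuousOn (fun t => ∫ s in (0:ℝ)..t, f s) (Set.Icc 0 T) := by
      have := intervalIntegral.continuousOn_primitive_interval (a := 0) (b := T)
        (f := f) (μ := volume) (by rw [huIcc]; exact hfc.integrableOn_Icc)
      rwa [huIcc] at this
    exact (Real.continuous_exp.comp_continuousOn h1).congr fun t _ => hF t
  have hHc : ContinuousOn H (Set.Icc 0 T) := by
    have h1 : ContinuousOn (fun t => ∫ s in (0:ℝ)..t, F s) (Set.Icc 0 T) := by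
      have := intervalIntegral.continuousOn_primitive_interval (a := 0) (b := T)
        (f := F) (μ := volume) (by rw [huIcc]; exact hFc.integrableOn_Icc)
      rwa [huIcc] at this
    exact h1.congr fun t _ => hH t
  set k : ℝ → ℝ := fun τ => g τ / F τ with hk
  set w : ℝ → ℝ := fun τ => H τ * g τ / F τ with hw
  have hkc : ContinuousOn k (Set.Icc 0 T) := hgc.div hFc fun t _ => (hFpos t).ne'
  have hwc : ContinuousOn w (Set.Icc 0 T) :=
    (hHc.mul hgc).div hFc fun t _ => (hFpos t).ne'
  set μ := volume.restrict (Set.Ioc (0:ℝ) T) with hμ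
  haveI : IsFiniteMeasure μ := ⟨by
    rw [hμ, Measure.restrict_apply_univ, Real.volume_Ioc]
    exact ENNReal.ofReal_lt_top⟩
  have hu1 : IntegrableOn u (Set.Ioc 0 T) := hu.integrable one_le_two
  have hu2 : IntegrableOn (fun t => (u t)^2) (Set.Ioc 0 T) := hu.integrable_sq
  have hFi : IntegrableOn F (Set.Ioc 0 T) :=
    hFc.integrableOn_Icc.mono_set Set.Ioc_subset_Icc_self
  -- integrability of k*u and w*u
  obtain ⟨Ck, hCk⟩ := isCompact_Icc.exists_bound_of_continuousOn hkc
  obtain ⟨Cw, hCw⟩ := isCompact_Icc.exists_bound_of_continuousOn hwc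
  have hkaesm : AEStronglyMeasurable k μ :=
    (hkc.mono Set.Ioc_subset_Icc_self).aestronglyMeasurable measurableSet_Ioc
  have hwaesm : AEStronglyMeasurable w μ :=
    (hwc.mono Set.Ioc_subset_Icc_self).aestronglyMeasurable measurableSet_Ioc
  have hkbd : ∀ᵐ x ∂μ, ‖k x‖ ≤ Ck := by
    rw [hμ]
    exact (ae_restrict_iff' measurableSet_Ioc).2
      (Filter.Eventually.of_forall fun x hx => hCk x (Set.Ioc_subset_Icc_self hx))
  have hwbd : ∀ᵐ x ∂μ, ‖w x‖ ≤ Cw := by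
    rw [hμ]
    exact (ae_restrict_iff' measurableSet_Ioc).2
      (Filter.Eventually.of_forall fun x hx => hCw x (Set.Ioc_subset_Icc_self hx))
  have hku : Integrable (fun τ => k τ * u τ) μ := hu1.bdd_mul hkaesm hkbd
  have hwu : Integrable (fun τ => w τ * u τ) μ := hu1.bdd_mul hwaesm hwbd
  -- the primitive G
  set G : ℝ → ℝ := fun t => ∫ τ in (0:ℝ)..t, k τ * u τ with hG
  have hGc : ContinuousOn G (Set.Icc 0 T) := by
    have := intervalIntegral.continuousOn_primitive_interval (a := 0) (b := T)
      (f := fun τ => k τ * u τ) (μ := volume)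
      (by rw [huIcc]; exact (integrableOn_Icc_iff_integrableOn_Ioc (ha := enorm_ne_top)).2 hku)
    rwa [huIcc] at this
  have hyc : ContinuousOn y (Set.Icc 0 T) :=
    (hFc.mul (continuousOn_const.add hGc)).congr fun t _ => hy t
  have hyi : IntegrableOn y (Set.Ioc 0 T) :=
    hyc.integrableOn_Icc.mono_set Set.Ioc_subset_Icc_self
  have hFGi : Integrable (fun t => F t * G t) μ :=
    ((hFc.mul hGc).integrableOn_Icc.mono_set Set.Ioc_subset_Icc_self)
  -- moment condition over Ioc
  have hmom' : ∫ τ in Set.Ioc (0:ℝ) T, k τ * u τ = -α := by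
    rw [← intervalIntegral.integral_of_le hT']
    rw [intervalIntegral.integral_congr (g := fun τ => u τ * (g τ / F τ))
      (fun τ _ => mul_comm _ _)]
    exact hmom
  -- interval integrability facts
  have hiiu : IntervalIntegrable u volume 0 T :=
    (intervalIntegrable_iff_integrableOn_Ioc_of_le hT').2 hu1
  have hiiu2 : IntervalIntegrable (fun t => (u t)^2) volume 0 T :=
    (intervalIntegrable_iff_integrableOn_Ioc_of_le hT').2 hu2
  have hiiy : IntervalIntegrable y volume 0 T :=
    (intervalIntegrable_iff_integrableOn_Ioc_of_le hT').2 hyi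
  have hiiuw : IntervalIntegrable (fun t => u t * w t) volume 0 T :=
    (intervalIntegrable_iff_integrableOn_Ioc_of_le hT').2
      (hwu.congr (Filter.Eventually.of_forall fun t => mul_comm _ _))
  -- KEY: ∫ y = -∫ u * w
  have keyA : ∫ t in (0:ℝ)..T, y t = - ∫ t in (0:ℝ)..T, u t * w t := by
    have step1 : ∫ t in (0:ℝ)..T, y t
        = α * H T + ∫ t in Set.Ioc (0:ℝ) T, F t * G t := by
      rw [intervalIntegral.integral_of_le hT',
        setIntegral_congr_fun measurableSet_Ioc
          (f := y) (g := fun t => α * F t + F t * G t)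
          (fun t _ => by rw [hy t]; simp only [hG, hk]; ring),
        integral_add (hFi.const_mul α) hFGi, MeasureTheory.integral_const_mul]
      congr 1
      rw [← intervalIntegral.integral_of_le hT', ← hH T]
    have step2 : ∫ t in Set.Ioc (0:ℝ) T, F t * G t
        = ∫ τ in Set.Ioc (0:ℝ) T, (k τ * u τ) * ∫ t in Set.Icc τ T, F t := by
      rw [← fubini_triangle (fun τ => k τ * u τ) F hku hFi]
      apply setIntegral_congr_fun measurableSet_Ioc
      intro t ht
      simp only [hG]
      rw [intervalIntegral.integral_of_le ht.1.le, mul_comm]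
    have step3 : ∀ τ ∈ Set.Ioc (0:ℝ) T, (∫ t in Set.Icc τ T, F t) = H T - H τ := by
      intro τ hτ
      rw [integral_Icc_eq_integral_Ioc, ← intervalIntegral.integral_of_le hτ.2,
        hH T, hH τ]
      have h1 : IntervalIntegrable F volume 0 T :=
        (intervalIntegrable_iff_integrableOn_Ioc_of_le hT').2 hFi
      have h2 : IntervalIntegrable F volume 0 τ :=
        (intervalIntegrable_iff_integrableOn_Ioc_of_le hτ.1.le).2
          (hFi.mono_set (Set.Ioc_subset_Ioc le_rfl hτ.2))
      exact (intervalIntegral.integral_interval_sub_left h1 h2).symm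
    have hkuH : Integrable (fun τ => (k τ * u τ) * H τ) μ :=
      hwu.congr (Filter.Eventually.of_forall fun τ => by
        simp only [hw, hk]; ring)
    have step4 : ∫ τ in Set.Ioc (0:ℝ) T, (k τ * u τ) * ∫ t in Set.Icc τ T, F t
        = H T * (-α) - ∫ τ in Set.Ioc (0:ℝ) T, u τ * w τ := by
      rw [setIntegral_congr_fun measurableSet_Ioc
        (g := fun τ => (k τ * u τ) * H T - (k τ * u τ) * H τ)
        (fun τ hτ => by rw [step3 τ hτ]; ring),
        integral_sub (hku.mul_const (H T)) hkuH, MeasureTheory.integral_mul_const, hmom',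
        mul_comm]
      congr 1
      exact setIntegral_congr_fun measurableSet_Ioc
        (fun τ _ => by simp only [hw, hk]; ring)
    rw [step1, step2, step4, ← intervalIntegral.integral_of_le hT']
    ring
  -- conclude
  have hiiA : IntervalIntegrable (fun t => 1/2 * (u t)^2 + u t) volume 0 T :=
    (hiiu2.const_mul (1/2)).add hiiu
  have hL : ∫ t in (0:ℝ)..T, (1/2 * (u t)^2 + u t - γ * y t)
      = (∫ t in (0:ℝ)..T, (1/2 * (u t)^2 + u t)) - γ * ∫ t in (0:ℝ)..T, y t := by
    rw [intervalIntegral.integral_sub hiiA (hiiy.const_mul γ),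
      intervalIntegral.integral_const_mul]
  have hR : ∫ t in (0:ℝ)..T, (1/2 * (u t)^2 + u t * (1 + γ * (H t * g t / F t)))
      = (∫ t in (0:ℝ)..T, (1/2 * (u t)^2 + u t)) + γ * ∫ t in (0:ℝ)..T, u t * w t := by
    rw [intervalIntegral.integral_congr
      (g := fun t => (1/2 * (u t)^2 + u t) + γ * (u t * w t))
      (fun t _ => by simp only [hw]; ring),
      intervalIntegral.integral_add hiiA (hiiuw.const_mul γ),
      intervalIntegral.integral_const_mul]
  rw [hL, hR, keyA]
  ring
end

section
/- Let f, g : [0,∞) → ℝ be continuous with f > 0 and g > 0, let T > 0, γ ≥ 1, α < 0, λ > 0, and set F(t) = exp(∫₀^t f(s) ds), H(t) = ∫₀^t F(τ) dτ, û(t) = max{0, -1 - γ g(t)H(t)/F(t) + λ g(t)/F(t)}. Let t₀ ∈ (0,T] be such that û(t) = -1 - γ g(t)H(t)/F(t) + λ g(t)/F(t) for t ∈ [0, t₀], û(t) = 0 for t ∈ [t₀, T], and -1 - γ g(t)H(t)/F(t) + λ g(t)/F(t) ≤ 0 for t ∈ [t₀, T]. Then for every δ ∈ L²(0,T) with ∫₀^T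 δ(τ) g(τ)/F(τ) dτ = 0, û(t) + δ(t) ≥ 0 almost everywhere, and δ(t) ≥ 0 for almost every t ∈ [t₀, T], one has ∫₀^T [½(û+δ)(t)² + (û+δ)(t)·(1 + γ H(t) g(t)/F(t))] dt ≥ ∫₀^T [½ û(t)² + û(t)·(1 + γ H(t) g(t)/F(t))] dt, with the difference bounded below by ∫₀^T ½ δ(t)² dt. -/
open MeasureTheory intervalIntegral

set_option maxHeartbeats 1000000

/-- With `F(t) = exp(∫₀^t f)`, `H(t) = ∫₀^t F`,
`uhat(t) = max{0, -1 - γ g H/F + λ g/F}`, and `t₀ ∈ (0,T]` such that `uhat`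
coincides with the unmaximized expression on `[0,t₀]`, vanishes on `[t₀,T]`
where the expression is `≤ 0`, every perturbation `δ ∈ L²(0,T)` with
`∫₀^T δ g/F = 0`, `uhat + δ ≥ 0` a.e. and `δ ≥ 0` a.e. on `[t₀,T]` increases
the reduced objective `Jred(u) = ∫₀^T [½u² + u(1 + γ H g/F)]`, the increase
being at least `∫₀^T ½δ²`. -/
theorem stmt_10 (f g : ℝ → ℝ)
    (hf : ContinuousOn f (Set.Ici 0)) (hg : ContinuousOn g (Set.Ici 0))
    (hfpos : ∀ t : ℝ, 0 ≤ t → 0 < f t) (hgpos : ∀ t : ℝ, 0 ≤ t → 0 < g t)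
    (T γ α lam : ℝ) (hT : 0 < T) (hγ : 1 ≤ γ) (hα : α < 0) (hlam : 0 < lam)
    (F H uhat : ℝ → ℝ)
    (hF : ∀ t, F t = Real.exp (∫ s in (0:ℝ)..t, f s))
    (hH : ∀ t, H t = ∫ τ in (0:ℝ)..t, F τ)
    (huhat : ∀ t, uhat t
      = max 0 (-1 - γ * (g t * H t) / F t + lam * (g t / F t)))
    (t₀ : ℝ) (ht₀ : t₀ ∈ Set.Ioc (0:ℝ) T)
    (huhat₁ : ∀ t ∈ Set.Icc (0:ℝ) t₀,
      uhat t = -1 - γ * (g t * H t) / F t + lam * (g t / F t))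
    (huhat₂ : ∀ t ∈ Set.Icc t₀ T, uhat t = 0)
    (hexpr : ∀ t ∈ Set.Icc t₀ T,
      -1 - γ * (g t * H t) / F t + lam * (g t / F t) ≤ 0)
    (Jred : (ℝ → ℝ) → ℝ)
    (hJred : ∀ u : ℝ → ℝ,
      Jred u = ∫ t in (0:ℝ)..T,
        (1/2 * (u t)^2 + u t * (1 + γ * (H t * g t / F t))))
    (δ : ℝ → ℝ)
    (hδ : MemLp δ 2 (volume.restrict (Set.Ioc (0:ℝ) T)))
    (hδmom : ∫ τ in (0:ℝ)..T, δ τ * (g τ / F τ) = 0)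
    (hδpos : ∀ᵐ t ∂(volume.restrict (Set.Ioc (0:ℝ) T)), 0 ≤ uhat t + δ t)
    (hδpos' : ∀ᵐ t ∂(volume.restrict (Set.Ioc t₀ T)), 0 ≤ δ t) :
    Jred uhat ≤ Jred (uhat + δ) ∧
    (∫ t in (0:ℝ)..T, 1/2 * (δ t)^2) ≤ Jred (uhat + δ) - Jred uhat := by
  obtain ⟨ht₀pos, ht₀T⟩ := ht₀
  have hT0 : (0:ℝ) ≤ T := hT.le
  have hIccsub : Set.Icc (0:ℝ) T ⊆ Set.Ici 0 := fun x hx => hx.1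
  -- Continuity facts on [0, T]
  have hfIcc : ContinuousOn f (Set.Icc 0 T) := hf.mono hIccsub
  have hgIcc : ContinuousOn g (Set.Icc 0 T) := hg.mono hIccsub
  have hAcont : ContinuousOn (fun t => ∫ s in (0:ℝ)..t, f s) (Set.Icc 0 T) := by
    have h := intervalIntegral.continuousOn_primitive_interval (μ := volume)
      (f := f) (a := 0) (b := T)
      (by rw [Set.uIcc_of_le hT0]; exact hfIcc.integrableOn_Icc)
    rwa [Set.uIcc_of_le hT0] at h
  have hFcont : ContinuousOn F (Set.Icc 0 T) := by
    have h : ContinuousOn (fun t => Real.exp (∫ s in (0:ℝ)..t, f s)) (Set.Icc 0 T) :=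
      Real.continuous_exp.comp_continuousOn hAcont
    exact h.congr fun x _ => hF x
  have hFpos : ∀ t, 0 < F t := fun t => (hF t) ▸ Real.exp_pos _
  have hHcont : ContinuousOn H (Set.Icc 0 T) := by
    have h := intervalIntegral.continuousOn_primitive_interval (μ := volume)
      (f := F) (a := 0) (b := T)
      (by rw [Set.uIcc_of_le hT0]; exact hFcont.integrableOn_Icc)
    rw [Set.uIcc_of_le hT0] at h
    exact h.congr fun x _ => hH x
  have hFne : ∀ x ∈ Set.Icc (0:ℝ) T, F x ≠ 0 := fun x _ => (hFpos x).ne'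
  have hrcont : ContinuousOn (fun t => g t / F t) (Set.Icc 0 T) :=
    hgIcc.div hFcont hFne
  have hccont : ContinuousOn (fun t => 1 + γ * (H t * g t / F t)) (Set.Icc 0 T) :=
    continuousOn_const.add (continuousOn_const.mul ((hHcont.mul hgIcc).div hFcont hFne))
  have huhatcont : ContinuousOn uhat (Set.Icc 0 T) := by
    have hecont : ContinuousOn
        (fun t => -1 - γ * (g t * H t) / F t + lam * (g t / F t)) (Set.Icc 0 T) :=
      ((continuousOn_const.sub
        ((continuousOn_const.mul (hgIcc.mul hHcont)).div hFcont hFne))).add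
        (continuousOn_const.mul hrcont)
    exact (ContinuousOn.sup continuousOn_const hecont).congr fun x _ => huhat x
  have hmcont : ContinuousOn (fun t => uhat t + (1 + γ * (H t * g t / F t)))
      (Set.Icc 0 T) := huhatcont.add hccont
  -- Integrability of δ and δ²
  haveI : IsFiniteMeasure (volume.restrict (Set.Ioc (0:ℝ) T)) :=
    ⟨by rw [Measure.restrict_apply_univ]; exact measure_Ioc_lt_top⟩
  have hδint : IntegrableOn δ (Set.Ioc 0 T) := hδ.integrable one_le_two
  have hδsq : IntegrableOn (fun t => (δ t)^2) (Set.Ioc 0 T) := hδ.integrable_sq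
  -- δ times a continuous-on-[0,T] function is integrable
  have hprod : ∀ φ : ℝ → ℝ, ContinuousOn φ (Set.Icc 0 T) →
      IntegrableOn (fun t => δ t * φ t) (Set.Ioc 0 T) := by
    intro φ hφ
    obtain ⟨C, hC⟩ := isCompact_Icc.exists_bound_of_continuousOn hφ
    refine Integrable.mono' (hδint.norm.const_mul C)
      (hδ.aestronglyMeasurable.mul
        ((hφ.mono Set.Ioc_subset_Icc_self).aestronglyMeasurable measurableSet_Ioc)) ?_
    filter_upwards [ae_restrict_mem measurableSet_Ioc] with x hx
    rw [norm_mul]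
    calc ‖δ x‖ * ‖φ x‖ ≤ ‖δ x‖ * C :=
          mul_le_mul_of_nonneg_left (hC x (Set.Ioc_subset_Icc_self hx)) (norm_nonneg _)
      _ = C * ‖δ x‖ := mul_comm _ _
  have hII : ∀ (h : ℝ → ℝ), IntegrableOn h (Set.Ioc 0 T) →
      ∀ a b : ℝ, 0 ≤ a → a ≤ b → b ≤ T → IntervalIntegrable h volume a b := by
    intro h hh a b ha hab hbT
    rw [intervalIntegrable_iff_integrableOn_Ioc_of_le hab]
    exact hh.mono_set (Set.Ioc_subset_Ioc ha hbT)
  -- the key products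
  have hwint : IntegrableOn
      (fun t => δ t * (uhat t + (1 + γ * (H t * g t / F t)))) (Set.Ioc 0 T) :=
    hprod _ hmcont
  have hrint : IntegrableOn (fun t => δ t * (lam * (g t / F t))) (Set.Ioc 0 T) :=
    hprod _ (continuousOn_const.mul hrcont)
  -- interval integrability
  have hw01 := hII _ hwint 0 t₀ le_rfl ht₀pos.le ht₀T
  have hw12 := hII _ hwint t₀ T ht₀pos.le ht₀T le_rfl
  have hw0T := hII _ hwint 0 T le_rfl hT0 le_rfl
  have hr01 := hII _ hrint 0 t₀ le_rfl ht₀pos.le ht₀T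
  have hr12 := hII _ hrint t₀ T ht₀pos.le ht₀T le_rfl
  -- On [0,t₀]: δ(û + c) = δ·λ·g/F
  have hw1 : (∫ t in (0:ℝ)..t₀, δ t * (uhat t + (1 + γ * (H t * g t / F t))))
      = ∫ t in (0:ℝ)..t₀, δ t * (lam * (g t / F t)) := by
    apply intervalIntegral.integral_congr
    intro x hx
    rw [Set.uIcc_of_le ht₀pos.le] at hx
    have h1 := huhat₁ x hx
    dsimp only
    rw [h1]
    ring
  -- On [t₀,T]: δ·λ·g/F ≤ δ(û + c)
  have hw2 : (∫ t in t₀..T, δ t * (lam * (g t / F t)))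
      ≤ ∫ t in t₀..T, δ t * (uhat t + (1 + γ * (H t * g t / F t))) := by
    apply intervalIntegral.integral_mono_ae_restrict ht₀T hr12 hw12
    rw [← Measure.restrict_congr_set Ioc_ae_eq_Icc]
    filter_upwards [hδpos', ae_restrict_mem measurableSet_Ioc] with x hx1 hx2
    have hxIcc : x ∈ Set.Icc t₀ T := ⟨hx2.1.le, hx2.2⟩
    have h2 := huhat₂ x hxIcc
    have h3 := hexpr x hxIcc
    rw [h2]
    apply mul_le_mul_of_nonneg_left _ hx1
    have heq : γ * (g x * H x) / F x = γ * (H x * g x / F x) := by ring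
    linarith
  -- total: 0 ≤ ∫₀^T δ(û + c)
  have hmom' : (∫ t in (0:ℝ)..T, δ t * (lam * (g t / F t))) = 0 := by
    have h : ∀ t : ℝ, δ t * (lam * (g t / F t)) = lam * (δ t * (g t / F t)) :=
      fun t => by ring
    simp_rw [h]
    rw [intervalIntegral.integral_const_mul, hδmom, mul_zero]
  have hwpos : 0 ≤ ∫ t in (0:ℝ)..T, δ t * (uhat t + (1 + γ * (H t * g t / F t))) := by
    have hsum : (∫ t in (0:ℝ)..t₀, δ t * (lam * (g t / F t)))
        + ∫ t in t₀..T, δ t * (lam * (g t / F t)) = 0 := by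
      rw [intervalIntegral.integral_add_adjacent_intervals hr01 hr12, hmom']
    rw [← intervalIntegral.integral_add_adjacent_intervals hw01 hw12, hw1]
    linarith
  -- decompose the objective
  have hbint : IntervalIntegrable
      (fun t => 1/2 * (uhat t)^2 + uhat t * (1 + γ * (H t * g t / F t)))
      volume 0 T := by
    apply ContinuousOn.intervalIntegrable
    rw [Set.uIcc_of_le hT0]
    exact (continuousOn_const.mul (huhatcont.pow 2)).add (huhatcont.mul hccont)
  have hδ2I : IntervalIntegrable (fun t => 1/2 * (δ t)^2) volume 0 T :=
    hII _ (hδsq.const_mul (1/2)) 0 T le_rfl hT0 le_rfl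
  have hqI : IntervalIntegrable
      (fun t => 1/2 * (δ t)^2 + δ t * (uhat t + (1 + γ * (H t * g t / F t))))
      volume 0 T := hδ2I.add hw0T
  have hJ1 : Jred (uhat + δ)
      = ∫ t in (0:ℝ)..T,
        ((1/2 * (uhat t)^2 + uhat t * (1 + γ * (H t * g t / F t)))
          + (1/2 * (δ t)^2 + δ t * (uhat t + (1 + γ * (H t * g t / F t))))) := by
    rw [hJred]
    apply intervalIntegral.integral_congr
    intro x _
    simp only [Pi.add_apply]
    ring
  have hJ2 : Jred (uhat + δ) = Jred uhat
      + ((∫ t in (0:ℝ)..T, 1/2 * (δ t)^2)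
        + ∫ t in (0:ℝ)..T, δ t * (uhat t + (1 + γ * (H t * g t / F t)))) := by
    rw [hJ1, intervalIntegral.integral_add hbint hqI,
      intervalIntegral.integral_add hδ2I hw0T, hJred uhat]
  have hδ2nonneg : 0 ≤ ∫ t in (0:ℝ)..T, 1/2 * (δ t)^2 :=
    intervalIntegral.integral_nonneg hT0 (fun x _ => by positivity)
  constructor
  · linarith
  · linarith
end

section
/- Let f : [0,∞) → ℝ be continuous with f > 0, let g : [0,∞) → ℝ be continuously differentiable with g > 0 and g'(t) ≤ f(t)·g(t) for all t ≥ 0, let α < 0, T > 0, and set F(t) = exp(∫₀^t f(s) ds), H(t) = ∫₀^t F(τ) dτ. Let t₁ ∈ (0, T) satisfy -α - (F(t₁)/g(t₁))·∫₀^{t₁} g²/F² dt + ∫₀^{t₁} g/F dt > 0, and define γ(t₁) = [ -α - (F(t₁)/g(t₁))·∫₀^{t₁} g²/F² dt + ∫₀^{t₁} g/F dt ] / [ ∫₀^{t₁} (H(t₁) - H(t)) g²/F² dt ] and λ₁ = [ -α + ∫₀^{t₁} g/F dt + γ(t₁)·∫₀^{t₁} H g²/F² dt ] / [ ∫₀^{t₁}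 g²/F² dt ]. Then the control û(t) = max{0, -1 - γ(t₁) g(t)H(t)/F(t) + λ₁ g(t)/F(t)} is nonincreasing on [0,T], satisfies û(t₁) = 0 and û(t) = 0 for all t ∈ [t₁, T] (i.e. its support is contained in [0, t₁]), and satisfies the moment equation ∫₀^T û(τ) g(τ)/F(τ) dτ = -α. -/
open MeasureTheory intervalIntegral

lemma stmt15_qderiv (f g g' F : ℝ → ℝ)
    (hf : ContinuousOn f (Set.Ici 0))
    (hgderiv : ∀ t : ℝ, 0 ≤ t → HasDerivWithinAt g (g' t) (Set.Ici 0) t)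
    (hF : ∀ t, F t = Real.exp (∫ s in (0:ℝ)..t, f s))
    (hF0 : ∀ u, 0 < F u)
    (t : ℝ) (ht : 0 < t) :
    HasDerivAt (fun u => g u / F u) ((g' t * F t - g t * (f t * F t)) / F t ^ 2) t := by
  have hmem : Set.Ici (0:ℝ) ∈ nhds t := Ici_mem_nhds ht
  have hintf : IntervalIntegrable f MeasureTheory.volume 0 t := by
    apply ContinuousOn.intervalIntegrable
    apply hf.mono
    rw [Set.uIcc_of_le ht.le]
    exact fun x hx => hx.1
  have hmeas : StronglyMeasurableAtFilter f (nhds t) MeasureTheory.volume :=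
    ⟨Set.Ici 0, hmem, hf.aestronglyMeasurable measurableSet_Ici⟩
  have hId : HasDerivAt (fun x => ∫ s in (0:ℝ)..x, f s) (f t) t :=
    intervalIntegral.integral_hasDerivAt_right hintf hmeas (hf.continuousAt hmem)
  have hFd : HasDerivAt F (f t * F t) t := by
    have h2 := hId.exp
    have hFeq : (fun x => Real.exp (∫ s in (0:ℝ)..x, f s)) = F := (funext hF).symm
    rw [hFeq, ← hF t, mul_comm] at h2
    exact h2
  have hgd : HasDerivAt g (g' t) t := (hgderiv t ht.le).hasDerivAt hmem
  exact hgd.div hFd (hF0 t).ne'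

/-- Under the assumptions `f` continuous positive, `g` C¹
positive with `g' ≤ f g`, `α < 0`, `T > 0`, `t₁ ∈ (0,T)` satisfying condition
(t1condition), with `F(t) = exp(∫₀^t f)`, `H(t) = ∫₀^t F`, and `γ(t₁)`, `λ₁`
defined by equations (18) and (19), the control
`uhat(t) = max{0, -1 - γ(t₁) g H/F + λ₁ g/F}` is nonincreasing on `[0,T]`,
satisfies `uhat(t₁) = 0`, vanishes on `[t₁,T]` (its support is contained in
`[0,t₁]`), and satisfies the moment equation `∫₀^T uhat g/F = -α`. -/
theorem stmt_15 (f g g' : ℝ → ℝ)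
    (hf : ContinuousOn f (Set.Ici 0))
    (hfpos : ∀ t : ℝ, 0 ≤ t → 0 < f t)
    (hgderiv : ∀ t : ℝ, 0 ≤ t → HasDerivWithinAt g (g' t) (Set.Ici 0) t)
    (hg'cont : ContinuousOn g' (Set.Ici 0))
    (hgpos : ∀ t : ℝ, 0 ≤ t → 0 < g t)
    (hineq : ∀ t : ℝ, 0 ≤ t → g' t ≤ f t * g t)
    (α T : ℝ) (hα : α < 0) (hT : 0 < T)
    (F H : ℝ → ℝ)
    (hF : ∀ t, F t = Real.exp (∫ s in (0:ℝ)..t, f s))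
    (hH : ∀ t, H t = ∫ τ in (0:ℝ)..t, F τ)
    (t₁ : ℝ) (ht₁ : t₁ ∈ Set.Ioo (0:ℝ) T)
    (hcond : 0 < -α - (F t₁ / g t₁) * (∫ t in (0:ℝ)..t₁, (g t)^2 / (F t)^2)
        + ∫ t in (0:ℝ)..t₁, g t / F t)
    (γt₁ lam₁ : ℝ)
    (hγt₁ : γt₁ =
      (-α - (F t₁ / g t₁) * (∫ t in (0:ℝ)..t₁, (g t)^2 / (F t)^2)
          + ∫ t in (0:ℝ)..t₁, g t / F t)
        / ∫ t in (0:ℝ)..t₁, (H t₁ - H t) * (g t)^2 / (F t)^2)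
    (hlam₁ : lam₁ =
      (-α + (∫ t in (0:ℝ)..t₁, g t / F t)
          + γt₁ * ∫ t in (0:ℝ)..t₁, H t * (g t)^2 / (F t)^2)
        / ∫ t in (0:ℝ)..t₁, (g t)^2 / (F t)^2)
    (uhat : ℝ → ℝ)
    (huhat : ∀ t, uhat t
      = max 0 (-1 - γt₁ * (g t * H t) / F t + lam₁ * (g t / F t))) :
    AntitoneOn uhat (Set.Icc 0 T) ∧
    uhat t₁ = 0 ∧
    (∀ t ∈ Set.Icc t₁ T, uhat t = 0) ∧
    ∫ τ in (0:ℝ)..T, uhat τ * (g τ / F τ) = -α := by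
  obtain ⟨ht₁0, ht₁T⟩ := ht₁
  have hF0 : ∀ t, 0 < F t := fun t => (hF t) ▸ Real.exp_pos _
  have hgc : ContinuousOn g (Set.Ici 0) := fun t ht => (hgderiv t ht).continuousWithinAt
  have hsubT : Set.Icc (0:ℝ) T ⊆ Set.Ici 0 := fun x hx => hx.1
  have hsub1 : Set.Icc (0:ℝ) t₁ ⊆ Set.Icc 0 T := Set.Icc_subset_Icc le_rfl ht₁T.le
  have huIccT : Set.uIcc (0:ℝ) T = Set.Icc 0 T := Set.uIcc_of_le hT.le
  have huIcc1 : Set.uIcc (0:ℝ) t₁ = Set.Icc 0 t₁ := Set.uIcc_of_le ht₁0.le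
  -- continuity of F on [0,T]
  have hFeq : F = fun t => Real.exp (∫ s in (0:ℝ)..t, f s) := funext hF
  have hIcont : ContinuousOn (fun x => ∫ s in (0:ℝ)..x, f s) (Set.Icc 0 T) := by
    have h := continuousOn_primitive_interval (f := f) (a := (0:ℝ)) (b := T)
      (μ := MeasureTheory.volume) (by rw [huIccT]; exact (hf.mono hsubT).integrableOn_Icc)
    rwa [huIccT] at h
  have hFc : ContinuousOn F (Set.Icc 0 T) := by
    rw [hFeq]; exact Real.continuous_exp.comp_continuousOn hIcont
  -- continuity of H on [0,T]
  have hHc : ContinuousOn H (Set.Icc 0 T) := by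
    rw [funext hH]
    have h := continuousOn_primitive_interval (f := F) (a := (0:ℝ)) (b := T)
      (μ := MeasureTheory.volume) (by rw [huIccT]; exact hFc.integrableOn_Icc)
    rwa [huIccT] at h
  have hFint : ∀ a b : ℝ, 0 ≤ a → a ≤ T → 0 ≤ b → b ≤ T →
      IntervalIntegrable F MeasureTheory.volume a b := by
    intro a b ha haT hb hbT
    apply ContinuousOn.intervalIntegrable
    apply hFc.mono
    intro x hx
    rcases le_total a b with h | h
    · rw [Set.uIcc_of_le h] at hx; exact ⟨le_trans ha hx.1, le_trans hx.2 hbT⟩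
    · rw [Set.uIcc_of_ge h] at hx; exact ⟨le_trans hb hx.1, le_trans hx.2 haT⟩
  -- H t - H s = ∫ s..t F
  have hHsub : ∀ s t : ℝ, 0 ≤ s → s ≤ t → t ≤ T →
      H t - H s = ∫ τ in s..t, F τ := by
    intro s t hs hst htT
    rw [hH s, hH t]
    exact integral_interval_sub_left
      (hFint 0 t le_rfl hT.le (le_trans hs hst) htT)
      (hFint 0 s le_rfl hT.le hs (le_trans hst htT))
  have hHmono : ∀ s t : ℝ, 0 ≤ s → s ≤ t → t ≤ T → H s ≤ H t := by
    intro s t hs hst htT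
    have h := hHsub s t hs hst htT
    have h2 : 0 ≤ ∫ τ in s..t, F τ :=
      intervalIntegral.integral_nonneg hst (fun u _ => (hF0 u).le)
    linarith
  have hHlt : ∀ s : ℝ, 0 ≤ s → s < t₁ → H s < H t₁ := by
    intro s hs hst
    have h := hHsub s t₁ hs hst.le ht₁T.le
    have h2 : 0 < ∫ τ in s..t₁, F τ :=
      intervalIntegral.intervalIntegral_pos_of_pos_on
        (hFint s t₁ hs (le_trans hst.le ht₁T.le) ht₁0.le ht₁T.le)
        (fun x _ => hF0 x) hst
    linarith
  -- q := g/F is antitone on [0,T]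
  have hqc : ContinuousOn (fun t => g t / F t) (Set.Icc 0 T) :=
    (hgc.mono hsubT).div hFc (fun t _ => (hF0 t).ne')
  have hqanti : AntitoneOn (fun t => g t / F t) (Set.Icc 0 T) := by
    apply antitoneOn_of_deriv_nonpos (convex_Icc 0 T) hqc
    · intro t ht
      rw [interior_Icc] at ht
      exact (stmt15_qderiv f g g' F hf hgderiv hF hF0 t ht.1).differentiableAt.differentiableWithinAt
    · intro t ht
      rw [interior_Icc] at ht
      rw [(stmt15_qderiv f g g' F hf hgderiv hF hF0 t ht.1).deriv]
      apply div_nonpos_of_nonpos_of_nonneg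
      · nlinarith [hineq t ht.1.le, hF0 t, hgpos t ht.1.le]
      · positivity
  -- integrability of the basic integrands on [0,t₁]
  have hgT : ContinuousOn g (Set.Icc 0 T) := hgc.mono hsubT
  have hcD : ContinuousOn (fun t => (g t)^2 / (F t)^2) (Set.Icc 0 t₁) :=
    ((hgT.mono hsub1).pow 2).div ((hFc.mono hsub1).pow 2)
      (fun t _ => pow_ne_zero _ (hF0 t).ne')
  have hint_D : IntervalIntegrable (fun t => (g t)^2 / (F t)^2)
      MeasureTheory.volume 0 t₁ :=
    ContinuousOn.intervalIntegrable (by rw [huIcc1]; exact hcD)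
  have hint_A : IntervalIntegrable (fun t => g t / F t) MeasureTheory.volume 0 t₁ :=
    ContinuousOn.intervalIntegrable (by rw [huIcc1]; exact hqc.mono hsub1)
  have hint_M : IntervalIntegrable (fun t => H t * (g t)^2 / (F t)^2)
      MeasureTheory.volume 0 t₁ := by
    apply ContinuousOn.intervalIntegrable
    rw [huIcc1]
    exact ((hHc.mono hsub1).mul ((hgT.mono hsub1).pow 2)).div ((hFc.mono hsub1).pow 2)
      (fun t _ => pow_ne_zero _ (hF0 t).ne')
  have hint_D₂ : IntervalIntegrable (fun t => (H t₁ - H t) * (g t)^2 / (F t)^2)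
      MeasureTheory.volume 0 t₁ := by
    apply ContinuousOn.intervalIntegrable
    rw [huIcc1]
    exact (((continuousOn_const.sub (hHc.mono hsub1)).mul ((hgT.mono hsub1).pow 2)).div
      ((hFc.mono hsub1).pow 2) (fun t _ => pow_ne_zero _ (hF0 t).ne'))
  have hD : 0 < ∫ t in (0:ℝ)..t₁, (g t)^2 / (F t)^2 :=
    intervalIntegral.intervalIntegral_pos_of_pos_on hint_D
      (fun x hx => div_pos (pow_pos (hgpos x hx.1.le) 2) (pow_pos (hF0 x) 2)) ht₁0
  have hD₂ : 0 < ∫ t in (0:ℝ)..t₁, (H t₁ - H t) * (g t)^2 / (F t)^2 :=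
    intervalIntegral.intervalIntegral_pos_of_pos_on hint_D₂
      (fun x hx => div_pos (mul_pos (sub_pos.mpr (hHlt x hx.1.le hx.2))
        (pow_pos (hgpos x hx.1.le) 2)) (pow_pos (hF0 x) 2)) ht₁0
  have hγpos : 0 < γt₁ := by rw [hγt₁]; exact div_pos hcond hD₂
  -- linearity identity: D₂ = H t₁ * D - M
  have hD₂eq : (∫ t in (0:ℝ)..t₁, (H t₁ - H t) * (g t)^2 / (F t)^2)
      = H t₁ * (∫ t in (0:ℝ)..t₁, (g t)^2 / (F t)^2)
        - ∫ t in (0:ℝ)..t₁, H t * (g t)^2 / (F t)^2 := by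
    have hcong : Set.EqOn (fun t => (H t₁ - H t) * (g t)^2 / (F t)^2)
        (fun t => H t₁ * ((g t)^2 / (F t)^2) - H t * (g t)^2 / (F t)^2)
        (Set.uIcc (0:ℝ) t₁) := fun t _ => by ring
    rw [intervalIntegral.integral_congr hcong,
      intervalIntegral.integral_sub (hint_D.const_mul _) hint_M,
      intervalIntegral.integral_const_mul]
  have hlamD : lam₁ * (∫ t in (0:ℝ)..t₁, (g t)^2 / (F t)^2)
      = -α + (∫ t in (0:ℝ)..t₁, g t / F t)
        + γt₁ * ∫ t in (0:ℝ)..t₁, H t * (g t)^2 / (F t)^2 := by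
    rw [hlam₁, div_mul_cancel₀ _ hD.ne']
  have hγD₂ : γt₁ * (∫ t in (0:ℝ)..t₁, (H t₁ - H t) * (g t)^2 / (F t)^2)
      = -α - (F t₁ / g t₁) * (∫ t in (0:ℝ)..t₁, (g t)^2 / (F t)^2)
        + ∫ t in (0:ℝ)..t₁, g t / F t := by
    rw [hγt₁, div_mul_cancel₀ _ hD₂.ne']
  have hkey : lam₁ - γt₁ * H t₁ = F t₁ / g t₁ := by
    have h2 : (lam₁ - γt₁ * H t₁) * (∫ t in (0:ℝ)..t₁, (g t)^2 / (F t)^2)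
        = (F t₁ / g t₁) * (∫ t in (0:ℝ)..t₁, (g t)^2 / (F t)^2) := by
      linear_combination hlamD - hγD₂ + γt₁ * hD₂eq
    exact mul_right_cancel₀ hD.ne' h2
  have hPform : ∀ t, -1 - γt₁ * (g t * H t) / F t + lam₁ * (g t / F t)
      = (lam₁ - γt₁ * H t) * (g t / F t) - 1 := fun t => by ring
  have hgt₁ne : g t₁ ≠ 0 := (hgpos t₁ ht₁0.le).ne'
  have hPt₁ : -1 - γt₁ * (g t₁ * H t₁) / F t₁ + lam₁ * (g t₁ / F t₁) = 0 := by
    rw [hPform, hkey]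
    field_simp [(hF0 t₁).ne', hgt₁ne]
    norm_num
  have hFg_pos : 0 < F t₁ / g t₁ := div_pos (hF0 t₁) (hgpos t₁ ht₁0.le)
  have hLts : ∀ t, 0 ≤ t → t ≤ t₁ → F t₁ / g t₁ ≤ lam₁ - γt₁ * H t := by
    intro t h0 h1
    have h2 := hHmono t t₁ h0 h1 ht₁T.le
    nlinarith
  -- antitone
  have hanti : AntitoneOn uhat (Set.Icc 0 T) := by
    intro s hs t ht hst
    rw [huhat s, huhat t, hPform s, hPform t]
    by_cases hP : (lam₁ - γt₁ * H t) * (g t / F t) - 1 ≤ 0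
    · rw [max_eq_left hP]; exact le_max_left _ _
    · push_neg at hP
      have hqt : 0 < g t / F t := div_pos (hgpos t ht.1) (hF0 t)
      have hLt : 0 < lam₁ - γt₁ * H t := by nlinarith
      have hLs : lam₁ - γt₁ * H t ≤ lam₁ - γt₁ * H s := by
        have := hHmono s t hs.1 hst ht.2
        nlinarith
      have hqst : g t / F t ≤ g s / F s := hqanti hs ht hst
      have hmm : (lam₁ - γt₁ * H t) * (g t / F t) ≤ (lam₁ - γt₁ * H s) * (g s / F s) :=
        mul_le_mul hLs hqst hqt.le (le_trans hLt.le hLs)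
      exact max_le_max le_rfl (by linarith)
  have hu0 : ∀ t, 0 ≤ uhat t := fun t => (huhat t) ▸ le_max_left _ _
  have hut₁ : uhat t₁ = 0 := by rw [huhat t₁, hPt₁, max_self]
  have hvanish : ∀ t ∈ Set.Icc t₁ T, uhat t = 0 := by
    intro t ht
    have h1 : uhat t ≤ uhat t₁ := hanti ⟨ht₁0.le, ht₁T.le⟩ ⟨le_trans ht₁0.le ht.1, ht.2⟩ ht.1
    rw [hut₁] at h1
    exact le_antisymm h1 (hu0 t)
  -- uhat = P on [0,t₁]
  have hueq : ∀ t ∈ Set.Icc (0:ℝ) t₁,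
      uhat t = (lam₁ - γt₁ * H t) * (g t / F t) - 1 := by
    intro t ht
    rw [huhat t, hPform t]
    apply max_eq_right
    have hL := hLts t ht.1 ht.2
    have hq : g t₁ / F t₁ ≤ g t / F t := hqanti (hsub1 ht) ⟨ht₁0.le, ht₁T.le⟩ ht.2
    have hqt₁ : 0 < g t₁ / F t₁ := div_pos (hgpos t₁ ht₁0.le) (hF0 t₁)
    have h1 : (F t₁ / g t₁) * (g t₁ / F t₁) ≤ (lam₁ - γt₁ * H t) * (g t / F t) :=
      mul_le_mul hL hq hqt₁.le (le_trans hFg_pos.le hL)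
    have h2 : (F t₁ / g t₁) * (g t₁ / F t₁) = 1 := by
      field_simp [(hF0 t₁).ne', hgt₁ne]
    linarith
  -- continuity of uhat
  have huc : ContinuousOn uhat (Set.Icc 0 T) := by
    rw [funext huhat]
    have h1 : ContinuousOn (fun t => γt₁ * (g t * H t) / F t) (Set.Icc 0 T) :=
      ((continuousOn_const (c := γt₁)).mul (hgT.mul hHc)).div hFc (fun t _ => (hF0 t).ne')
    have h2 : ContinuousOn (fun t => lam₁ * (g t / F t)) (Set.Icc 0 T) :=
      (continuousOn_const (c := lam₁)).mul hqc
    exact (continuousOn_const (c := (0:ℝ))).sup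
      (((continuousOn_const (c := (-1:ℝ))).sub h1).add h2)
  have hintu : ∀ a b : ℝ, 0 ≤ a → b ≤ T → a ≤ b →
      IntervalIntegrable (fun τ => uhat τ * (g τ / F τ)) MeasureTheory.volume a b := by
    intro a b ha hb hab
    apply ContinuousOn.intervalIntegrable
    rw [Set.uIcc_of_le hab]
    exact (huc.mono (Set.Icc_subset_Icc ha hb)).mul (hqc.mono (Set.Icc_subset_Icc ha hb))
  have hsplit : (∫ τ in (0:ℝ)..T, uhat τ * (g τ / F τ))
      = (∫ τ in (0:ℝ)..t₁, uhat τ * (g τ / F τ))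
        + ∫ τ in t₁..T, uhat τ * (g τ / F τ) :=
    (integral_add_adjacent_intervals (hintu 0 t₁ le_rfl ht₁T.le ht₁0.le)
      (hintu t₁ T ht₁0.le le_rfl ht₁T.le)).symm
  have hzero2 : (∫ τ in t₁..T, uhat τ * (g τ / F τ)) = 0 := by
    have hcong : Set.EqOn (fun τ => uhat τ * (g τ / F τ)) (fun _ => (0:ℝ))
        (Set.uIcc t₁ T) := by
      intro τ hτ
      rw [Set.uIcc_of_le ht₁T.le] at hτ
      simp [hvanish τ hτ]
    rw [intervalIntegral.integral_congr hcong]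
    simp
  have hmain : (∫ τ in (0:ℝ)..t₁, uhat τ * (g τ / F τ))
      = lam₁ * (∫ t in (0:ℝ)..t₁, (g t)^2 / (F t)^2)
        - γt₁ * (∫ t in (0:ℝ)..t₁, H t * (g t)^2 / (F t)^2)
        - ∫ t in (0:ℝ)..t₁, g t / F t := by
    have hcong : Set.EqOn (fun τ => uhat τ * (g τ / F τ))
        (fun τ => lam₁ * ((g τ)^2 / (F τ)^2) - γt₁ * (H τ * (g τ)^2 / (F τ)^2)
          - g τ / F τ) (Set.uIcc (0:ℝ) t₁) := by
      intro τ hτ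
      rw [huIcc1] at hτ
      simp only
      rw [hueq τ hτ]
      have hFne : F τ ≠ 0 := (hF0 τ).ne'
      field_simp
    rw [intervalIntegral.integral_congr hcong,
      intervalIntegral.integral_sub ((hint_D.const_mul _).sub (hint_M.const_mul _)) hint_A,
      intervalIntegral.integral_sub (hint_D.const_mul _) (hint_M.const_mul _),
      intervalIntegral.integral_const_mul, intervalIntegral.integral_const_mul]
  refine ⟨hanti, hut₁, hvanish, ?_⟩
  rw [hsplit, hzero2, hmain]
  linarith
end
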